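/- arXiv:1904.10556 — 4 statements merged into one kernel-verified Lean document; each statement's English description precedes it below -/
import Mathlib

section
/- Let 0 < α < 1, k > 0 and q₀ ∈ ℝ, and define q(t) = q₀ · E_α(-k·t^α) for t ≥ 0. Then q is differentiable on (0,∞) and for every t > 0 it satisfies the fractional first-order (relaxation) equation ᶜD^α q(t) = -k·q(t), i.e. (1/Γ(1-α)) · ∫_0^t q'(τ)·(t-τ)^{-α} dτ = -k·q₀·E_α(-k·t^α), with q(0) = q₀. -/
open Real Filter Topology MeasureTheory Set intervalIntegral
open scoped ENNReal NNReal

/-- The two-parameter Mittag-Leffler function `E_{a,b}(z) = ∑_{k=0}^∞ z^k / Γ(a·k + b)`. -/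
noncomputable def mittagLeffler (a b : ℝ) (z : ℝ) : ℝ :=
  ∑' k : ℕ, z ^ k / Real.Gamma (a * k + b)

noncomputable def mlF (α k : ℝ) (n : ℕ) (s : ℝ) : ℝ :=
  (-k) ^ n * s ^ (α * n) / Real.Gamma (α * n + 1)

noncomputable def mlG (α k : ℝ) (n : ℕ) (s : ℝ) : ℝ :=
  (-k) ^ n * (α * n * s ^ (α * n - 1)) / Real.Gamma (α * n + 1)

lemma summable_master (α r : ℝ) (hα : 0 < α) (hr : 0 ≤ r) :
    Summable (fun n : ℕ => r ^ n * (α * n + 1) / Real.Gamma (α * n + 1)) := by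
  set a : ℕ → ℝ := fun n => r ^ n * (α * n + 1) / Real.Gamma (α * n + 1) with ha
  have hΓpos : ∀ n : ℕ, 0 < Real.Gamma (α * n + 1) := fun n =>
    Real.Gamma_pos_of_pos (by positivity)
  have hanonneg : ∀ n, 0 ≤ a n := fun n => by
    have := hΓpos n
    have : (0:ℝ) ≤ r ^ n * (α * n + 1) := by positivity
    positivity
  -- the shifted sequence a n * 2^n tends to 0
  set y : ℝ := max 1 ((2 * r) ^ (1 / α)) with hy
  have hy1 : (1:ℝ) ≤ y := le_max_left _ _
  have hy0 : (0:ℝ) < y := lt_of_lt_of_le one_pos hy1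
  set b : ℕ → ℝ := fun m => 4 * y * (2 * y) ^ m / m.factorial with hb
  have hbtend : Tendsto b atTop (𝓝 0) := by
    have h1 : Tendsto (fun m : ℕ => (2 * y) ^ m / m.factorial) atTop (𝓝 0) :=
      (Real.summable_pow_div_factorial (2 * y)).tendsto_atTop_zero
    have := h1.const_mul (4 * y)
    simpa [hb, mul_div_assoc] using this
  have hfloor : Tendsto (fun n : ℕ => ⌊α * n⌋₊) atTop atTop := by
    apply tendsto_nat_floor_atTop.comp
    exact (tendsto_natCast_atTop_atTop (R := ℝ)).const_mul_atTop hα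
  have key : Tendsto (fun n => a n * 2 ^ n) atTop (𝓝 0) := by
    refine squeeze_zero' ?_ ?_ (hbtend.comp hfloor)
    · filter_upwards with n
      positivity
    · -- eventually a n * 2^n ≤ b ⌊α n⌋₊
      have hev : ∀ᶠ n : ℕ in atTop, 1 ≤ α * n := by
        have := (tendsto_natCast_atTop_atTop (R := ℝ)).const_mul_atTop hα
        exact this.eventually_ge_atTop 1
      filter_upwards [hev] with n hn
      set m : ℕ := ⌊α * n⌋₊ with hm
      have hm1 : 1 ≤ m := Nat.le_floor (by exact_mod_cast hn)
      have hmle : (m : ℝ) ≤ α * n := Nat.floor_le (by positivity)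
      have hlem : α * n ≤ m + 1 := (Nat.lt_floor_add_one _).le
      -- Γ(αn+1) ≥ m!
      have hΓ : (m.factorial : ℝ) ≤ Real.Gamma (α * n + 1) := by
        rw [← Real.Gamma_nat_eq_factorial]
        apply StrictMonoOn.monotoneOn Real.Gamma_strictMonoOn_Ici
        · simp only [Set.mem_Ici]
          push_cast
          have : (1:ℝ) ≤ m := by exact_mod_cast hm1
          linarith
        · simp only [Set.mem_Ici]; linarith
        · push_cast; linarith
      -- (2r)^n ≤ y^(m+1)
      have hpow : (2 * r) ^ n ≤ y ^ (m + 1) := by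
        have h2r : (0:ℝ) ≤ 2 * r := by linarith
        have e1 : (2 * r) ^ n = ((2 * r) ^ (1 / α)) ^ (α * n) := by
          rw [← Real.rpow_natCast (2 * r) n, ← Real.rpow_mul h2r]
          congr 1
          field_simp
        rw [e1]
        calc ((2 * r) ^ (1 / α)) ^ (α * n) ≤ y ^ (α * n) :=
              Real.rpow_le_rpow (Real.rpow_nonneg h2r _) (le_max_right _ _) (by positivity)
          _ ≤ y ^ ((m:ℝ) + 1) := Real.rpow_le_rpow_of_exponent_le hy1 (by push_cast; linarith)
          _ = y ^ (m + 1) := by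
              rw [← Real.rpow_natCast y (m+1)]; push_cast; ring_nf
      have hcoef : α * n + 1 ≤ (m:ℝ) + 2 := by linarith
      have hm2 : (m:ℝ) + 2 ≤ 2 ^ (m + 2) := by
        calc (m:ℝ) + 2 ≤ (m + 2 : ℕ) := by push_cast; linarith
          _ ≤ 2 ^ (m + 2 : ℕ) := by exact_mod_cast (Nat.lt_two_pow_self (n := m+2)).le
      -- combine
      have expand : a n * 2 ^ n = (2 * r) ^ n * (α * n + 1) / Real.Gamma (α * n + 1) := by
        rw [ha]
        simp only [mul_pow]
        ring
      rw [expand]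
      have h1 : (2 * r) ^ n * (α * n + 1) ≤ y ^ (m + 1) * ((m:ℝ) + 2) := by
        apply mul_le_mul hpow hcoef (by positivity) (by positivity)
      calc (2 * r) ^ n * (α * n + 1) / Real.Gamma (α * n + 1)
          ≤ y ^ (m + 1) * ((m:ℝ) + 2) / (m.factorial : ℝ) := by
            apply div_le_div₀ (by positivity) h1 (by positivity) hΓ
        _ ≤ b m := by
            rw [hb]
            apply div_le_div_of_nonneg_right ?_ (by positivity)
            have : y ^ (m + 1) * ((m:ℝ) + 2) = y * y ^ m * ((m:ℝ) + 2) := by ring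
            rw [this]
            have h4 : (m:ℝ) + 2 ≤ 4 * 2 ^ m := by
              have := hm2
              have e : (2:ℝ) ^ (m + 2) = 4 * 2 ^ m := by ring
              linarith [e ▸ hm2]
            calc y * y ^ m * ((m:ℝ) + 2) ≤ y * y ^ m * (4 * 2 ^ m) := by
                  apply mul_le_mul_of_nonneg_left h4 (by positivity)
              _ = 4 * y * (2 * y) ^ m := by rw [mul_pow]; ring
  -- conclude summability
  have hev2 : ∀ᶠ n : ℕ in atTop, a n * 2 ^ n ≤ 1 := by
    filter_upwards [key.eventually_le_const one_pos] with n hn using hn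
  have hbig : (fun n => a n) =O[atTop] (fun n => ((1:ℝ)/2) ^ n) := by
    rw [Asymptotics.isBigO_iff]
    refine ⟨1, ?_⟩
    filter_upwards [hev2] with n hn
    have h2n : (0:ℝ) < 2 ^ n := by positivity
    rw [Real.norm_eq_abs, Real.norm_eq_abs, abs_of_nonneg (hanonneg n), one_mul,
      abs_of_nonneg (by positivity)]
    rw [div_pow, one_pow]
    rw [le_div_iff₀ h2n]
    exact hn
  exact summable_of_isBigO_nat (summable_geometric_of_lt_one (by norm_num) (by norm_num)) hbig

lemma betaIntegrable {a b t : ℝ} (ha : 0 < a) (hb : 0 < b) (ht : 0 < t) :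
    IntervalIntegrable (fun τ => τ ^ (a - 1) * (t - τ) ^ (b - 1)) volume 0 t := by
  have h1 : IntervalIntegrable (fun τ => τ ^ (a - 1) * (t - τ) ^ (b - 1)) volume 0 (t/2) := by
    apply IntervalIntegrable.mul_continuousOn
    · exact intervalIntegral.intervalIntegrable_rpow' (by linarith)
    · apply ContinuousOn.rpow_const
      · exact (continuous_const.sub continuous_id).continuousOn
      · intro x hx
        rw [Set.uIcc_of_le (by linarith)] at hx
        left
        have := hx.2
        intro h
        have : x = t := by linarith [sub_eq_zero.mp h]
        linarith [hx.2, this ▸ hx.2]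
  have h2 : IntervalIntegrable (fun τ => τ ^ (a - 1) * (t - τ) ^ (b - 1)) volume (t/2) t := by
    have base : IntervalIntegrable (fun τ : ℝ => (t - τ) ^ (b - 1)) volume (t/2) t := by
      have : IntervalIntegrable (fun x : ℝ => x ^ (b - 1)) volume 0 (t/2) :=
        intervalIntegral.intervalIntegrable_rpow' (by linarith)
      have h2 := (this.comp_sub_left t).symm
      rw [sub_zero, sub_half] at h2
      exact h2
    have := base.mul_continuousOn (g := fun τ : ℝ => τ ^ (a - 1)) ?_
    · simpa [mul_comm] using this
    · apply ContinuousOn.rpow_const continuous_id.continuousOn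
      intro x hx
      rw [Set.uIcc_of_le (by linarith)] at hx
      left
      have := hx.1
      intro h; simp only [id_eq] at h; rw [h] at this; linarith
  exact h1.trans h2

lemma betaEval {a b t : ℝ} (ha : 0 < a) (hb : 0 < b) (ht : 0 < t) :
    ∫ τ in (0:ℝ)..t, τ ^ (a - 1) * (t - τ) ^ (b - 1)
      = Real.Gamma a * Real.Gamma b / Real.Gamma (a + b) * t ^ (a + b - 1) := by
  have key := Complex.betaIntegral_scaled (a : ℂ) (b : ℂ) ht
  have hbeta : Complex.betaIntegral a b
      = ((Real.Gamma a * Real.Gamma b / Real.Gamma (a + b) : ℝ) : ℂ) := by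
    have h := Complex.Gamma_mul_Gamma_eq_betaIntegral
      (s := (a:ℂ)) (t := (b:ℂ)) (by simpa using ha) (by simpa using hb)
    have hne : Complex.Gamma ((a:ℂ) + b) ≠ 0 := by
      rw [(by push_cast; ring : ((a:ℂ) + b) = ((a + b : ℝ) : ℂ)), Complex.Gamma_ofReal]
      exact_mod_cast (Real.Gamma_pos_of_pos (by linarith)).ne'
    have h' : Complex.betaIntegral a b
        = Complex.Gamma a * Complex.Gamma b / Complex.Gamma ((a:ℂ) + b) := by
      rw [eq_div_iff hne, mul_comm]
      exact h.symm
    rw [h', (by push_cast; ring : ((a:ℂ) + b) = ((a + b : ℝ) : ℂ)), Complex.Gamma_ofReal,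
      Complex.Gamma_ofReal, Complex.Gamma_ofReal]
    push_cast
    ring
  -- LHS complex integral equals ofReal of real integral
  have congr1 : ∫ x in (0:ℝ)..t, ((x:ℂ) ^ ((a:ℂ) - 1) * ((t:ℂ) - x) ^ ((b:ℂ) - 1))
      = ∫ x in (0:ℝ)..t, ((x ^ (a-1) * (t - x) ^ (b-1) : ℝ) : ℂ) := by
    apply intervalIntegral.integral_congr
    intro x hx
    rw [Set.uIcc_of_le ht.le] at hx
    simp only []
    rw [Complex.ofReal_mul, Complex.ofReal_cpow hx.1 (a-1),
      Complex.ofReal_cpow (by linarith [hx.2] : (0:ℝ) ≤ t - x) (b-1)]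
    push_cast
    ring
  rw [congr1, intervalIntegral.integral_ofReal, hbeta] at key
  have hcpow : ((t:ℂ)) ^ ((a:ℂ) + b - 1) = ((t ^ (a + b - 1) : ℝ) : ℂ) := by
    rw [Complex.ofReal_cpow ht.le]
    push_cast
    ring_nf
  rw [hcpow, ← Complex.ofReal_mul] at key
  have := Complex.ofReal_inj.mp key
  rw [this]; ring

lemma Gamma_ml_pos {α : ℝ} (hα : 0 < α) (n : ℕ) : 0 < Real.Gamma (α * n + 1) :=
  Real.Gamma_pos_of_pos (by positivity)

lemma mlE_eq {α k : ℝ} {s : ℝ} (hs : 0 < s) :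
    mittagLeffler α 1 (-(k * s ^ α)) = ∑' n, mlF α k n s := by
  unfold mittagLeffler mlF
  congr 1
  funext n
  congr 1
  rw [neg_mul_eq_neg_mul, mul_pow, ← Real.rpow_natCast (s ^ α) n, ← Real.rpow_mul hs.le]

lemma mlHasDeriv {α k : ℝ} (hα : 0 < α) (hk : 0 < k) {q₀ : ℝ} {q : ℝ → ℝ}
    (hq : q = fun t : ℝ => q₀ * mittagLeffler α 1 (-(k * t ^ α)))
    {t : ℝ} (ht : 0 < t) :
    HasDerivAt q (q₀ * ∑' n, mlG α k n t) t := by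
  have hΓpos := Gamma_ml_pos hα
  set S : Set ℝ := Ioo (t / 2) (2 * t) with hS
  have hSopen : IsOpen S := isOpen_Ioo
  have htS : t ∈ S := ⟨by linarith, by linarith⟩
  set B : ℝ := max 1 (2 * t) with hB
  have hB1 : (1:ℝ) ≤ B := le_max_left _ _
  have hB0 : (0:ℝ) < B := lt_of_lt_of_le one_pos hB1
  have hBpow : ∀ c : ℝ, 0 < c → ∀ n : ℕ, (c ^ α) ^ n = c ^ (α * n) := by
    intro c hc n
    rw [← Real.rpow_natCast (c ^ α) n, ← Real.rpow_mul hc.le]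
  -- bound on mlG on S
  have hgbound : ∀ (n : ℕ) (s : ℝ), s ∈ S →
      ‖mlG α k n s‖ ≤ (2 / t) * ((k * B ^ α) ^ n * (α * n + 1) / Real.Gamma (α * n + 1)) := by
    intro n s hs
    have hs0 : 0 < s := lt_trans (by linarith) hs.1
    have hsB : s ≤ B := le_trans hs.2.le (le_max_right _ _)
    unfold mlG
    rw [Real.norm_eq_abs, abs_div, abs_of_pos (hΓpos n), abs_mul, abs_pow, abs_neg,
      abs_of_pos hk, abs_mul, abs_of_nonneg (by positivity : (0:ℝ) ≤ α * n),
      abs_of_nonneg (Real.rpow_nonneg hs0.le _)]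
    rw [div_le_iff₀ (hΓpos n)]
    have expand : (2 / t) * ((k * B ^ α) ^ n * (α * n + 1) / Real.Gamma (α * n + 1))
        * Real.Gamma (α * n + 1) = (2 / t) * ((k * B ^ α) ^ n * (α * n + 1)) := by
      field_simp
    rw [expand, mul_pow, hBpow B hB0]
    have hsplit : s ^ (α * n - 1) = s ^ (α * n) * s⁻¹ := by
      rw [(by ring : α * (n:ℝ) - 1 = α * n + (-1)), Real.rpow_add hs0, Real.rpow_neg_one]
    rw [hsplit]
    have h1 : s ^ (α * n) ≤ B ^ (α * n) :=
      Real.rpow_le_rpow hs0.le hsB (by positivity)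
    have h2 : s⁻¹ ≤ 2 / t := by
      rw [(by rw [inv_div] : 2 / t = (t / 2)⁻¹)]
      exact inv_anti₀ (by linarith) hs.1.le
    have hA : k ^ n * (α * n) ≤ k ^ n * (α * n + 1) :=
      mul_le_mul_of_nonneg_left (by linarith) (by positivity)
    have hAB : k ^ n * (α * n) * s ^ (α * n) ≤ k ^ n * (α * n + 1) * B ^ (α * n) :=
      mul_le_mul hA h1 (Real.rpow_nonneg hs0.le _) (by positivity)
    have hBnn : (0:ℝ) ≤ B ^ (α * n) := Real.rpow_nonneg hB0.le _
    calc k ^ n * (α * n * (s ^ (α * n) * s⁻¹)) = k ^ n * (α * n) * s ^ (α * n) * s⁻¹ := by ring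
      _ ≤ k ^ n * (α * n + 1) * B ^ (α * n) * (2 / t) :=
          mul_le_mul hAB h2 (inv_nonneg.mpr hs0.le) (by positivity)
      _ = (2 / t) * (k ^ n * B ^ (α * n) * (α * n + 1)) := by ring
  have hu : Summable (fun n : ℕ =>
      (2 / t) * ((k * B ^ α) ^ n * (α * n + 1) / Real.Gamma (α * n + 1))) :=
    (summable_master α (k * B ^ α) hα (by positivity)).mul_left _
  have hunif := tendstoUniformlyOn_tsum_nat hu hgbound
  have hfs : ∀ s ∈ S, Summable (fun n => mlF α k n s) := by
    intro s hs
    have hs0 : 0 < s := lt_trans (by linarith) hs.1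
    have hsB : s ≤ B := le_trans hs.2.le (le_max_right _ _)
    apply Summable.of_norm_bounded (summable_master α (k * B ^ α) hα (by positivity))
    intro n
    unfold mlF
    rw [Real.norm_eq_abs, abs_div, abs_of_pos (hΓpos n), abs_mul, abs_pow, abs_neg,
      abs_of_pos hk, abs_of_nonneg (Real.rpow_nonneg hs0.le _)]
    rw [mul_pow, hBpow B hB0]
    have hBnn : (0:ℝ) ≤ B ^ (α * n) := Real.rpow_nonneg hB0.le _
    have hnum : k ^ n * s ^ (α * n) ≤ k ^ n * B ^ (α * n) * (α * n + 1) := by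
      calc k ^ n * s ^ (α * n) ≤ k ^ n * B ^ (α * n) :=
            mul_le_mul_of_nonneg_left (Real.rpow_le_rpow hs0.le hsB (by positivity))
              (by positivity)
        _ ≤ k ^ n * B ^ (α * n) * (α * n + 1) :=
            le_mul_of_one_le_right (by positivity)
              (by nlinarith [mul_nonneg hα.le (Nat.cast_nonneg n)])
    exact div_le_div_of_nonneg_right hnum (hΓpos n).le
  have hE : HasDerivAt (fun s => ∑' n, mlF α k n s) (∑' n, mlG α k n t) t := by
    apply hasDerivAt_of_tendstoLocallyUniformlyOn hSopen
      (f := fun N s => ∑ n ∈ Finset.range N, mlF α k n s)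
      (f' := fun N s => ∑ n ∈ Finset.range N, mlG α k n s)
      hunif.tendstoLocallyUniformlyOn ?_ ?_ htS
    · filter_upwards with N s hs
      apply HasDerivAt.fun_sum
      intro n _
      have hs0 : 0 < s := lt_trans (by linarith) hs.1
      have h := ((Real.hasDerivAt_rpow_const (x := s) (p := α * n)
        (Or.inl hs0.ne')).const_mul ((-k) ^ n)).div_const (Real.Gamma (α * n + 1))
      exact h
    · intro s hs
      exact (hfs s hs).hasSum.tendsto_sum_nat
  have hq' : HasDerivAt (fun s => q₀ * ∑' n, mlF α k n s) (q₀ * ∑' n, mlG α k n t) t :=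
    hE.const_mul q₀
  apply hq'.congr_of_eventuallyEq
  apply eventuallyEq_of_mem (isOpen_Ioi.mem_nhds ht)
  intro s hs
  rw [hq]
  simp only
  rw [mlE_eq (α := α) (k := k) hs]

lemma mlJ {α : ℝ} (k : ℝ) (hα : 0 < α) (hα1 : α < 1) {t : ℝ} (ht : 0 < t)
    (n : ℕ) (hn : n ≠ 0) :
    IntegrableOn (fun τ => mlG α k n τ * (t - τ) ^ (-α)) (Ioo 0 t) volume ∧
    ∫ τ in Ioo 0 t, mlG α k n τ * (t - τ) ^ (-α)
      = (-k) ^ n * (Real.Gamma (1 - α) * (t ^ (α * n - α) / Real.Gamma (α * n - α + 1))) := by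
  have hn' : (0:ℝ) < α * n :=
    mul_pos hα (by exact_mod_cast Nat.pos_of_ne_zero hn)
  have hb : (0:ℝ) < 1 - α := by linarith
  have hΓa : (0:ℝ) < Real.Gamma (α * n) := Real.Gamma_pos_of_pos hn'
  have hΓ1 : (0:ℝ) < Real.Gamma (α * n + 1) := Real.Gamma_pos_of_pos (by linarith)
  have hBI := betaIntegrable hn' hb ht
  rw [show (1:ℝ) - α - 1 = -α by ring] at hBI
  have hIoc : IntegrableOn (fun τ => τ ^ (α * n - 1) * (t - τ) ^ (-α)) (Ioc 0 t) volume :=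
    (intervalIntegrable_iff_integrableOn_Ioc_of_le ht.le).mp hBI
  have hIoo := hIoc.mono_set Ioo_subset_Ioc_self
  set C : ℝ := (-k) ^ n * (α * n) / Real.Gamma (α * n + 1) with hC
  have hfun : (fun τ => mlG α k n τ * (t - τ) ^ (-α))
      = fun τ => C * (τ ^ (α * n - 1) * (t - τ) ^ (-α)) := by
    funext τ
    unfold mlG
    rw [hC]
    ring
  constructor
  · rw [hfun]
    exact hIoo.const_mul C
  · rw [hfun, MeasureTheory.integral_const_mul]
    have hval : ∫ τ in Ioo 0 t, τ ^ (α * n - 1) * (t - τ) ^ (-α)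
        = Real.Gamma (α * n) * Real.Gamma (1 - α) / Real.Gamma (α * n - α + 1)
          * t ^ (α * n - α) := by
      rw [← integral_Ioc_eq_integral_Ioo, ← intervalIntegral.integral_of_le ht.le]
      have hBE := betaEval hn' hb ht
      rw [show (1:ℝ) - α - 1 = -α by ring,
        show α * (n:ℝ) + (1 - α) = α * n - α + 1 by ring,
        show α * (n:ℝ) - α + 1 - 1 = α * n - α by ring] at hBE
      exact hBE
    rw [hval]
    have hCG : C * Real.Gamma (α * n) = (-k) ^ n := by
      rw [hC, Real.Gamma_add_one hn'.ne']
      field_simp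
    calc C * (Real.Gamma (α * n) * Real.Gamma (1 - α) / Real.Gamma (α * n - α + 1)
          * t ^ (α * n - α))
        = (C * Real.Gamma (α * n)) * (Real.Gamma (1 - α)
          * (t ^ (α * n - α) / Real.Gamma (α * n - α + 1))) := by ring
      _ = (-k) ^ n * (Real.Gamma (1 - α)
          * (t ^ (α * n - α) / Real.Gamma (α * n - α + 1))) := by rw [hCG]

lemma mlG_norm {α k : ℝ} (hα : 0 < α) (hk : 0 < k) {t : ℝ} (ht : 0 < t) (n : ℕ) {τ : ℝ}
    (hτ : τ ∈ Ioo 0 t) :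
    ‖mlG α k n τ * (t - τ) ^ (-α)‖ = mlG α (-k) n τ * (t - τ) ^ (-α) := by
  have hτ0 : 0 < τ := hτ.1
  have htτ : 0 < t - τ := by have := hτ.2; linarith
  have hΓ : (0:ℝ) < Real.Gamma (α * n + 1) := Real.Gamma_pos_of_pos (by positivity)
  have h1 : (0:ℝ) ≤ α * n * τ ^ (α * (n:ℝ) - 1) :=
    mul_nonneg (by positivity) (Real.rpow_nonneg hτ0.le _)
  have h2 : (0:ℝ) ≤ (t - τ) ^ (-α) := Real.rpow_nonneg htτ.le _
  unfold mlG
  rw [neg_neg, Real.norm_eq_abs, abs_mul, abs_div, abs_mul, abs_pow, abs_neg,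
    abs_of_pos hk, abs_of_pos hΓ, abs_of_nonneg h1, abs_of_nonneg h2]

/-- Let 0 < α < 1, k > 0 and q₀ ∈ ℝ, and define
`q(t) = q₀ · E_α(-k·t^α)`. Then q is differentiable on (0,∞), satisfies
the fractional relaxation equation `ᶜD^α q(t) = -k·q(t)` for every t > 0,
and `q(0) = q₀`. -/
theorem mittagLeffler_solves_fractional_relaxation (α k q₀ : ℝ)
    (hα : 0 < α) (hα1 : α < 1) (hk : 0 < k) (q : ℝ → ℝ)
    (hq : q = fun t : ℝ => q₀ * mittagLeffler α 1 (-(k * t ^ α))) :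
    (∀ t : ℝ, 0 < t → DifferentiableAt ℝ q t) ∧
    (∀ t : ℝ, 0 < t →
      (1 / Real.Gamma (1 - α)) * ∫ τ in (0:ℝ)..t, deriv q τ * (t - τ) ^ (-α)
        = -k * (q₀ * mittagLeffler α 1 (-(k * t ^ α)))) ∧
    q 0 = q₀ := by
  have hΓb : (0:ℝ) < Real.Gamma (1 - α) := Real.Gamma_pos_of_pos (by linarith)
  refine ⟨fun t ht => (mlHasDeriv hα hk hq ht).differentiableAt, fun t ht => ?_, ?_⟩
  · -- the fractional relaxation equation
    have hBpow : ∀ n : ℕ, (t ^ α) ^ n = t ^ (α * n) := fun n => by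
      rw [← Real.rpow_natCast (t ^ α) n, ← Real.rpow_mul ht.le]
    have hΓexp : ∀ n : ℕ, (0:ℝ) < Real.Gamma (α * n - α + 1) := fun n => by
      apply Real.Gamma_pos_of_pos
      have : (0:ℝ) ≤ α * n := by positivity
      linarith
    set W : ℕ → ℝ := fun n =>
      k ^ n * (Real.Gamma (1 - α) * (t ^ (α * n - α) / Real.Gamma (α * n - α + 1))) with hW
    have hWnn : ∀ n, 0 ≤ W n := fun n => by
      have h1 := hΓexp n
      have h2 : (0:ℝ) ≤ t ^ (α * (n:ℝ) - α) := Real.rpow_nonneg ht.le _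
      rw [hW]
      positivity
    have hWsum : Summable W := by
      rw [← summable_nat_add_iff 1]
      apply Summable.of_nonneg_of_le (fun n => hWnn (n + 1)) ?_
        ((summable_master α (k * t ^ α) hα (by positivity)).mul_left (k * Real.Gamma (1 - α)))
      intro n
      have e1 : α * ((n:ℝ) + 1) - α = α * n := by ring
      have hΓ1 : (0:ℝ) < Real.Gamma (α * n + 1) := Real.Gamma_pos_of_pos (by positivity)
      have heq : W (n + 1) = (k * Real.Gamma (1 - α)) * ((k * t ^ α) ^ n / Real.Gamma (α * n + 1)) := by
        rw [hW]
        simp only [Nat.cast_add, Nat.cast_one]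
        rw [e1, mul_pow, hBpow n, pow_succ]
        ring
      rw [heq]
      apply mul_le_mul_of_nonneg_left ?_ (by positivity)
      rw [div_le_div_iff₀ hΓ1 hΓ1]
      apply mul_le_mul_of_nonneg_right ?_ hΓ1.le
      apply le_mul_of_one_le_right (by positivity)
      have : (0:ℝ) ≤ α * n := by positivity
      linarith
    have hmeas : ∀ n : ℕ, AEStronglyMeasurable (fun τ => mlG α k n τ * (t - τ) ^ (-α))
        (volume.restrict (Ioo 0 t)) := by
      intro n
      apply Measurable.aestronglyMeasurable
      unfold mlG
      fun_prop
    have hzero : (fun τ : ℝ => mlG α k 0 τ * (t - τ) ^ (-α)) = fun _ => (0:ℝ) := by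
      funext τ
      simp [mlG]
    have hInt : ∀ n : ℕ, IntegrableOn (fun τ => mlG α k n τ * (t - τ) ^ (-α)) (Ioo 0 t) volume := by
      intro n
      rcases eq_or_ne n 0 with h0 | h0
      · subst h0
        rw [hzero]
        exact integrableOn_zero
      · exact (mlJ k hα hα1 ht n h0).1
    have hNormInt : ∀ n : ℕ, n ≠ 0 →
        ∫ τ in Ioo 0 t, ‖mlG α k n τ * (t - τ) ^ (-α)‖ = W n := by
      intro n h0
      rw [setIntegral_congr_fun measurableSet_Ioo (fun τ hτ => mlG_norm hα hk ht n hτ),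
        (mlJ (-k) hα hα1 ht n h0).2, hW, neg_neg]
    have hlint : ∑' n : ℕ, ∫⁻ τ in Ioo 0 t, ‖mlG α k n τ * (t - τ) ^ (-α)‖₊ ∂volume ≠ ⊤ := by
      have hle : ∀ n : ℕ, ∫⁻ τ in Ioo 0 t, ‖mlG α k n τ * (t - τ) ^ (-α)‖₊ ∂volume
          ≤ ENNReal.ofReal (W n) := by
        intro n
        rcases eq_or_ne n 0 with h0 | h0
        · subst h0
          have : ∀ τ : ℝ, (‖mlG α k 0 τ * (t - τ) ^ (-α)‖₊ : ℝ≥0∞) = 0 := fun τ => by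
            simp [mlG]
          rw [lintegral_congr this]
          simp
        · simp only [← enorm_eq_nnnorm]
          rw [← ofReal_integral_norm_eq_lintegral_enorm (hInt n), hNormInt n h0]
      have : ∑' n : ℕ, ∫⁻ τ in Ioo 0 t, ‖mlG α k n τ * (t - τ) ^ (-α)‖₊ ∂volume
          ≤ ENNReal.ofReal (∑' n, W n) := by
        rw [ENNReal.ofReal_tsum_of_nonneg hWnn hWsum]
        exact ENNReal.tsum_le_tsum hle
      exact (lt_of_le_of_lt this ENNReal.ofReal_lt_top).ne
    have hderiv : ∀ τ ∈ Ioo (0:ℝ) t, deriv q τ = q₀ * ∑' n, mlG α k n τ := fun τ hτ =>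
      (mlHasDeriv hα hk hq hτ.1).deriv
    rw [intervalIntegral.integral_of_le ht.le, integral_Ioc_eq_integral_Ioo]
    rw [setIntegral_congr_fun (g := fun τ => q₀ * ∑' n, (mlG α k n τ * (t - τ) ^ (-α)))
      measurableSet_Ioo (fun τ hτ => by rw [hderiv τ hτ, mul_assoc, ← tsum_mul_right])]
    rw [MeasureTheory.integral_const_mul, integral_tsum hmeas hlint]
    set V : ℕ → ℝ := fun n =>
      (-k) ^ n * (Real.Gamma (1 - α) * (t ^ (α * n - α) / Real.Gamma (α * n - α + 1))) with hV
    have hJval : ∀ n : ℕ, ∫ τ in Ioo 0 t, mlG α k n τ * (t - τ) ^ (-α)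
        = if n = 0 then 0 else V n := by
      intro n
      rcases eq_or_ne n 0 with h0 | h0
      · subst h0
        rw [if_pos rfl, hzero]
        simp
      · rw [if_neg h0]
        exact (mlJ k hα hα1 ht n h0).2
    rw [tsum_congr hJval]
    have hVsum : Summable (fun n => if n = 0 then 0 else V n) := by
      apply Summable.of_norm_bounded hWsum
      intro n
      rcases eq_or_ne n 0 with h0 | h0
      · subst h0
        simpa using hWnn 0
      · rw [if_neg h0, hV, hW]
        have h2 : (0:ℝ) ≤ t ^ (α * (n:ℝ) - α) := Real.rpow_nonneg ht.le _
        rw [Real.norm_eq_abs, abs_mul, abs_pow, abs_neg, abs_of_pos hk,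
          abs_of_nonneg (mul_nonneg hΓb.le (div_nonneg h2 (hΓexp n).le))]
    rw [hVsum.tsum_eq_zero_add]
    have hshift : ∀ n : ℕ, (if n + 1 = 0 then (0:ℝ) else V (n + 1))
        = ((-k) * Real.Gamma (1 - α)) * mlF α k n t := by
      intro n
      rw [if_neg (Nat.succ_ne_zero n), hV]
      simp only [Nat.cast_add, Nat.cast_one]
      rw [show α * ((n:ℝ) + 1) - α = α * n by ring]
      unfold mlF
      rw [pow_succ]
      ring
    rw [if_pos rfl, zero_add, tsum_congr hshift, tsum_mul_left, mlE_eq (k := k) ht]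
    field_simp
  · rw [hq]
    simp only
    rw [Real.zero_rpow hα.ne', mul_zero, neg_zero]
    unfold mittagLeffler
    rw [tsum_eq_single 0 (fun n hn => by rw [zero_pow hn, zero_div])]
    norm_num [Real.Gamma_one]
end

section
/- For every t ≥ 0, the one-parameter Mittag-Leffler function of order 1/2 satisfies E_{1/2}(-√t) = e^t · (1 + erf(-√t)) = e^t · (1 - (2/√π) · ∫_0^{√t} e^{-u²} du). Equivalently, the solution of the Caputo initial value problem ᶜD^{1/2} q = -q, q(0)=1, has the closed form q(t) = e^t·erfc(√t). -/
namespace MLhalfAux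

open Real

/-- Coefficients of `E_{1/2}(-x)` as a power series in `x`. -/
noncomputable def c (k : ℕ) : ℝ := (-1) ^ k / Real.Gamma ((k : ℝ) / 2 + 1)

lemma gamma_pos (k : ℕ) : 0 < Real.Gamma ((k : ℝ) / 2 + 1) :=
  Real.Gamma_pos_of_pos (by positivity)

lemma abs_c (k : ℕ) : |c k| = 1 / Real.Gamma ((k : ℝ) / 2 + 1) := by
  rw [c, abs_div, abs_pow, abs_neg, abs_one, one_pow, abs_of_pos (gamma_pos k)]

lemma c_zero : c 0 = 1 := by
  simp [c, Real.Gamma_one]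

lemma c_one : c 1 = -(2 / Real.sqrt Real.pi) := by
  have h : ((1 : ℕ) : ℝ) / 2 + 1 = 1 / 2 + 1 := by norm_num
  rw [c, h, Real.Gamma_add_one (by norm_num), Real.Gamma_one_half_eq]
  have hπ : (0:ℝ) < Real.sqrt Real.pi := Real.sqrt_pos.mpr Real.pi_pos
  field_simp

lemma abs_c_even (m : ℕ) : |c (2 * m)| = 1 / (m.factorial : ℝ) := by
  have h : ((2 * m : ℕ) : ℝ) / 2 + 1 = (m : ℝ) + 1 := by push_cast; ring
  rw [abs_c, h, Real.Gamma_nat_eq_factorial]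

lemma gamma_odd_ge (m : ℕ) : (m.factorial : ℝ) / 2 ≤ Real.Gamma ((m : ℝ) + 3 / 2) := by
  induction m with
  | zero =>
    have : ((0 : ℕ) : ℝ) + 3 / 2 = 1 / 2 + 1 := by norm_num
    rw [this, Real.Gamma_add_one (by norm_num), Real.Gamma_one_half_eq]
    have h1 : (1 : ℝ) ≤ Real.sqrt Real.pi := by
      rw [show (1:ℝ) = Real.sqrt 1 by simp]
      exact Real.sqrt_le_sqrt (by linarith [Real.pi_gt_three])
    simp only [Nat.factorial_zero, Nat.cast_one]
    linarith
  | succ n ih =>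
    have h : ((n + 1 : ℕ) : ℝ) + 3 / 2 = ((n : ℝ) + 3 / 2) + 1 := by push_cast; ring
    rw [h, Real.Gamma_add_one (by positivity)]
    have hfac : ((n + 1).factorial : ℝ) = ((n : ℝ) + 1) * n.factorial := by
      rw [Nat.factorial_succ]; push_cast; ring
    have hn1 : ((n : ℝ) + 1) ≤ (n : ℝ) + 3 / 2 := by linarith
    have hG : (0 : ℝ) < Real.Gamma ((n : ℝ) + 3 / 2) := Real.Gamma_pos_of_pos (by positivity)
    calc ((n + 1).factorial : ℝ) / 2 = ((n : ℝ) + 1) * ((n.factorial : ℝ) / 2) := by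
          rw [hfac]; ring
      _ ≤ ((n : ℝ) + 1) * Real.Gamma ((n : ℝ) + 3 / 2) := by
          apply mul_le_mul_of_nonneg_left ih (by positivity)
      _ ≤ ((n : ℝ) + 3 / 2) * Real.Gamma ((n : ℝ) + 3 / 2) := by
          apply mul_le_mul_of_nonneg_right hn1 hG.le

lemma abs_c_odd_le (m : ℕ) : |c (2 * m + 1)| ≤ 2 / (m.factorial : ℝ) := by
  have h : ((2 * m + 1 : ℕ) : ℝ) / 2 + 1 = (m : ℝ) + 3 / 2 := by push_cast; ring
  rw [abs_c, h]
  have h1 := gamma_odd_ge m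
  have hG : (0 : ℝ) < Real.Gamma ((m : ℝ) + 3 / 2) := Real.Gamma_pos_of_pos (by positivity)
  have hf : (0 : ℝ) < (m.factorial : ℝ) := by positivity
  rw [div_le_div_iff₀ hG hf]
  nlinarith

/-- The key recurrence `(k+2)·c(k+2) = 2·c(k)`, from `Γ(x+1) = x·Γ(x)`. -/
lemma c_rec (k : ℕ) : ((k : ℝ) + 2) * c (k + 2) = 2 * c k := by
  have h : ((k + 2 : ℕ) : ℝ) / 2 + 1 = ((k : ℝ) / 2 + 1) + 1 := by push_cast; ring
  have hx : ((k : ℝ) / 2 + 1) ≠ 0 := by positivity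
  have hG : Real.Gamma (((k + 2 : ℕ) : ℝ) / 2 + 1)
      = ((k : ℝ) / 2 + 1) * Real.Gamma ((k : ℝ) / 2 + 1) := by
    rw [h, Real.Gamma_add_one hx]
  have hGpos := gamma_pos k
  rw [c, c, hG]
  have hpow : ((-1 : ℝ)) ^ (k + 2) = (-1 : ℝ) ^ k := by
    rw [pow_add]; norm_num
  rw [hpow]
  field_simp

lemma two_m_one_le (m : ℕ) : (2 * (m : ℝ) + 2) ≤ 2 * 2 ^ m := by
  induction m with
  | zero => norm_num
  | succ n ih =>
    push_cast
    push_cast at ih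
    rw [pow_succ]
    nlinarith [pow_pos (by norm_num : (0:ℝ) < 2) n]

/-- Master summability estimate. -/
lemma summable_master (r : ℝ) (hr : 0 ≤ r) :
    Summable (fun k : ℕ => ((k : ℝ) + 1) * |c k| * r ^ k) := by
  apply Summable.even_add_odd
  · apply Summable.of_nonneg_of_le (fun m => by positivity)
      (f := fun m : ℕ => 2 * ((2 * r ^ 2) ^ m / (m.factorial : ℝ)))
    · intro m
      rw [abs_c_even, pow_mul]
      have h2 : ((2 * m : ℕ) : ℝ) + 1 ≤ 2 * 2 ^ m := by
        push_cast; linarith [two_m_one_le m]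
      calc (((2 * m : ℕ) : ℝ) + 1) * (1 / (m.factorial : ℝ)) * (r ^ 2) ^ m
          ≤ (2 * 2 ^ m) * (1 / (m.factorial : ℝ)) * (r ^ 2) ^ m := by gcongr
        _ = 2 * ((2 * r ^ 2) ^ m / (m.factorial : ℝ)) := by rw [mul_pow]; ring
    · exact (Real.summable_pow_div_factorial (2 * r ^ 2)).mul_left 2
  · apply Summable.of_nonneg_of_le (fun m => by positivity)
      (f := fun m : ℕ => (4 * r) * ((2 * r ^ 2) ^ m / (m.factorial : ℝ)))
    · intro m
      have hc := abs_c_odd_le m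
      have h1 : r ^ (2 * m + 1) = r * (r ^ 2) ^ m := by rw [pow_succ, pow_mul]; ring
      have h2 : ((2 * m + 1 : ℕ) : ℝ) + 1 ≤ 2 * 2 ^ m := by
        push_cast; linarith [two_m_one_le m]
      calc (((2 * m + 1 : ℕ) : ℝ) + 1) * |c (2 * m + 1)| * r ^ (2 * m + 1)
          ≤ (2 * 2 ^ m) * (2 / (m.factorial : ℝ)) * r ^ (2 * m + 1) := by gcongr
        _ = (4 * r) * ((2 * r ^ 2) ^ m / (m.factorial : ℝ)) := by
            rw [h1, mul_pow]; ring
    · exact (Real.summable_pow_div_factorial (2 * r ^ 2)).mul_left (4 * r)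

lemma summable_terms (x : ℝ) : Summable (fun k : ℕ => c k * x ^ k) := by
  apply Summable.of_norm_bounded (summable_master |x| (abs_nonneg x))
  intro k
  rw [Real.norm_eq_abs, abs_mul, abs_pow]
  nlinarith [abs_nonneg (c k), pow_nonneg (abs_nonneg x) k, Nat.cast_nonneg (α := ℝ) k,
    mul_nonneg (abs_nonneg (c k)) (pow_nonneg (abs_nonneg x) k)]

lemma summable_deriv_terms (x : ℝ) :
    Summable (fun k : ℕ => c k * ((k : ℝ) * x ^ (k - 1))) := by
  apply Summable.of_norm_bounded (summable_master (|x| + 1) (by positivity))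
  intro k
  rw [Real.norm_eq_abs, abs_mul, abs_mul, Nat.abs_cast, abs_pow]
  have h1 : |x| ^ (k - 1) ≤ (|x| + 1) ^ k := by
    calc |x| ^ (k - 1) ≤ (|x| + 1) ^ (k - 1) := by
          apply pow_le_pow_left₀ (abs_nonneg x); linarith
      _ ≤ (|x| + 1) ^ k := by
          apply pow_le_pow_right₀ (by linarith [abs_nonneg x]) (Nat.sub_le k 1)
  have h2 : (k : ℝ) ≤ (k : ℝ) + 1 := by linarith
  calc |c k| * ((k : ℝ) * |x| ^ (k - 1))
      ≤ |c k| * (((k : ℝ) + 1) * (|x| + 1) ^ k) := by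
        apply mul_le_mul_of_nonneg_left _ (abs_nonneg _)
        exact mul_le_mul h2 h1 (by positivity) (by positivity)
    _ = ((k : ℝ) + 1) * |c k| * (|x| + 1) ^ k := by ring

/-- The Mittag-Leffler-type power series. -/
noncomputable def E (x : ℝ) : ℝ := ∑' k : ℕ, c k * x ^ k

lemma hasDerivAt_E_aux (x : ℝ) :
    HasDerivAt E (∑' k : ℕ, c k * ((k : ℝ) * x ^ (k - 1))) x := by
  set R := |x| + 1 with hR
  have hR1 : (1:ℝ) ≤ R := by rw [hR]; linarith [abs_nonneg x]
  have hR0 : (0:ℝ) < R := by linarith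
  apply hasDerivAt_tsum_of_isPreconnected
    (u := fun k : ℕ => ((k : ℝ) + 1) * |c k| * R ^ k)
    (summable_master R hR0.le) (Metric.isOpen_ball (x := (0:ℝ)) (ε := R))
    ((convex_ball (0:ℝ) R).isPreconnected)
    (g := fun k y => c k * y ^ k) (g' := fun k y => c k * ((k : ℝ) * y ^ (k - 1)))
    (y₀ := 0)
  · intro n y _
    exact (hasDerivAt_pow n y).const_mul (c n)
  · intro n y hy
    rw [Metric.mem_ball, Real.dist_eq, sub_zero] at hy
    rw [Real.norm_eq_abs, abs_mul, abs_mul, Nat.abs_cast, abs_pow]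
    have h1 : |y| ^ (n - 1) ≤ R ^ n := by
      calc |y| ^ (n - 1) ≤ R ^ (n - 1) := by
            apply pow_le_pow_left₀ (abs_nonneg y) hy.le
        _ ≤ R ^ n := pow_le_pow_right₀ hR1 (Nat.sub_le n 1)
    have h2 : (n : ℝ) ≤ (n : ℝ) + 1 := by linarith
    calc |c n| * ((n : ℝ) * |y| ^ (n - 1))
        ≤ |c n| * (((n : ℝ) + 1) * R ^ n) := by
          apply mul_le_mul_of_nonneg_left _ (abs_nonneg _)
          exact mul_le_mul h2 h1 (by positivity) (by positivity)
      _ = ((n : ℝ) + 1) * |c n| * R ^ n := by ring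
  · rw [Metric.mem_ball, Real.dist_eq, sub_zero]; simpa using hR0
  · exact summable_terms 0
  · rw [Metric.mem_ball, Real.dist_eq, sub_zero, hR]
    linarith

lemma deriv_sum_eq (x : ℝ) :
    (∑' k : ℕ, c k * ((k : ℝ) * x ^ (k - 1))) = 2 * x * E x - 2 / Real.sqrt Real.pi := by
  have h1 := summable_deriv_terms x
  rw [Summable.tsum_eq_zero_add h1]
  have hshift : (fun k : ℕ => c (k + 1) * (((k + 1 : ℕ) : ℝ) * x ^ (k + 1 - 1)))
      = fun k : ℕ => c (k + 1) * (((k : ℝ) + 1) * x ^ k) := by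
    funext k; push_cast; norm_num
  rw [show (fun k : ℕ => c (k + 1) * (((k + 1 : ℕ) : ℝ) * x ^ (k + 1 - 1)))
      = fun k : ℕ => c (k + 1) * (((k : ℝ) + 1) * x ^ k) from hshift]
  have h2 : Summable (fun k : ℕ => c (k + 1) * (((k : ℝ) + 1) * x ^ k)) := by
    rw [← hshift]
    exact (summable_nat_add_iff 1).mpr h1
  rw [Summable.tsum_eq_zero_add h2]
  have hterm : ∀ k : ℕ, c (k + 1 + 1) * ((((k + 1 : ℕ) : ℝ) + 1) * x ^ (k + 1))
      = 2 * x * (c k * x ^ k) := by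
    intro k
    have hx : ((k : ℝ) + 2) * c (k + 2) = 2 * c k := c_rec k
    have e : c (k + 1 + 1) * ((((k + 1 : ℕ) : ℝ) + 1) * x ^ (k + 1))
        = (((k : ℝ) + 2) * c (k + 2)) * (x * x ^ k) := by
      push_cast
      rw [pow_succ]
      ring_nf
    rw [e, hx]; ring
  have h3 : (∑' k : ℕ, c (k + 1 + 1) * ((((k + 1 : ℕ) : ℝ) + 1) * x ^ (k + 1)))
      = 2 * x * E x := by
    rw [tsum_congr hterm, tsum_mul_left]
    rfl
  rw [h3, c_one]
  norm_num
  ring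

lemma hasDerivAt_E (x : ℝ) :
    HasDerivAt E (2 * x * E x - 2 / Real.sqrt Real.pi) x := by
  have := hasDerivAt_E_aux x
  rwa [deriv_sum_eq] at this

noncomputable def F (x : ℝ) : ℝ := E x * Real.exp (-x ^ 2)

lemma hasDerivAt_F (x : ℝ) :
    HasDerivAt F (-(2 / Real.sqrt Real.pi) * Real.exp (-x ^ 2)) x := by
  have h1 := hasDerivAt_E x
  have h2 : HasDerivAt (fun y : ℝ => -y ^ 2) (-(2 * x ^ 1)) x := (hasDerivAt_pow 2 x).neg
  have h3 : HasDerivAt (fun y : ℝ => Real.exp (-y ^ 2))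
      (Real.exp (-x ^ 2) * (-(2 * x ^ 1))) x := h2.exp
  have h4 : HasDerivAt F
      ((2 * x * E x - 2 / Real.sqrt Real.pi) * Real.exp (-x ^ 2)
        + E x * (Real.exp (-x ^ 2) * (-(2 * x ^ 1)))) x := h1.mul h3
  convert h4 using 1
  ring

lemma E_zero : E 0 = 1 := by
  rw [E, tsum_eq_single 0 (by intro k hk; simp [zero_pow hk])]
  simpa using c_zero

lemma F_eq (x : ℝ) :
    F x = 1 - (2 / Real.sqrt Real.pi) * ∫ u in (0:ℝ)..x, Real.exp (-u ^ 2) := by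
  have hftc := intervalIntegral.integral_eq_sub_of_hasDerivAt
    (f := F) (f' := fun u => -(2 / Real.sqrt Real.pi) * Real.exp (-u ^ 2))
    (a := 0) (b := x) (fun u _ => hasDerivAt_F u)
    (by
      apply Continuous.intervalIntegrable
      continuity)
  rw [intervalIntegral.integral_const_mul] at hftc
  have hF0 : F 0 = 1 := by simp [F, E_zero]
  rw [hF0] at hftc
  linarith [hftc]

end MLhalfAux

/-- For every t ≥ 0, the one-parameter Mittag-Leffler function of order 1/2
satisfies `E_{1/2}(-√t) = e^t · (1 + erf(-√t)) = e^t · (1 - (2/√π)·∫_0^{√t} e^{-u²} du)`;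
i.e. the solution of `ᶜD^{1/2} q = -q`, `q(0)=1`, is `q(t) = e^t · erfc(√t)`. -/
theorem mittagLeffler_half_eq_exp_erfc (t : ℝ) (ht : 0 ≤ t) :
    mittagLeffler (1/2) 1 (-Real.sqrt t)
      = Real.exp t *
          (1 - (2 / Real.sqrt Real.pi) * ∫ u in (0:ℝ)..Real.sqrt t, Real.exp (-u ^ 2)) := by
  set x := Real.sqrt t with hxdef
  have hx2 : x ^ 2 = t := Real.sq_sqrt ht
  have hml : mittagLeffler (1/2) 1 (-x) = MLhalfAux.E x := by
    rw [mittagLeffler, MLhalfAux.E]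
    apply tsum_congr
    intro k
    rw [MLhalfAux.c]
    have harg : (1 / 2 : ℝ) * (k : ℝ) + 1 = (k : ℝ) / 2 + 1 := by ring
    rw [harg, neg_pow]
    ring
  have hFeq := MLhalfAux.F_eq x
  rw [MLhalfAux.F] at hFeq
  have hexp : Real.exp (-x ^ 2) = Real.exp (-t) := by rw [hx2]
  rw [hexp] at hFeq
  have hE : MLhalfAux.E x = Real.exp t *
      (1 - (2 / Real.sqrt Real.pi) * ∫ u in (0:ℝ)..x, Real.exp (-u ^ 2)) := by
    have : MLhalfAux.E x * Real.exp (-t) * Real.exp t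
        = (1 - (2 / Real.sqrt Real.pi) * ∫ u in (0:ℝ)..x, Real.exp (-u ^ 2)) * Real.exp t := by
      rw [hFeq]
    rw [mul_assoc, ← Real.exp_add] at this
    simpa [mul_comm] using this
  rw [hml, hE]
end

section
/- Let 0 < μ ≤ 1, ν > 0 and k ≥ 0, and let s > 0 be a real number with s^μ > k. Then the Laplace transform of t ↦ t^{ν-1}·E_{μ,ν}(-k·t^μ) exists and satisfies ∫_0^∞ e^{-s·t} · t^{ν-1} · E_{μ,ν}(-k·t^μ) dt = s^{μ-ν} / (s^μ + k). -/
open MeasureTheory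

lemma ml_aux_integrable {a s : ℝ} (ha : 0 < a) (hs : 0 < s) :
    IntegrableOn (fun t : ℝ => t ^ (a - 1) * Real.exp (-(s * t))) (Set.Ioi 0) := by
  have h := integrableOn_rpow_mul_exp_neg_mul_rpow (s := a - 1) (p := 1) (b := s)
    (by linarith) one_pos hs
  refine h.congr_fun (fun t ht => ?_) measurableSet_Ioi
  simp [Real.rpow_one, neg_mul]

/-- Let 0 < μ ≤ 1, ν > 0 and k ≥ 0, and let s > 0 with s^μ > k. Then the
Laplace transform of `t ↦ t^{ν-1}·E_{μ,ν}(-k·t^μ)` exists and equals `s^{μ-ν}/(s^μ + k)`. -/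
theorem laplace_mittagLeffler (μ ν k s : ℝ) (hμ : 0 < μ) (hμ1 : μ ≤ 1)
    (hν : 0 < ν) (hk : 0 ≤ k) (hs : 0 < s) (hsk : k < s ^ μ) :
    IntegrableOn
      (fun t : ℝ => Real.exp (-(s * t)) * t ^ (ν - 1) * mittagLeffler μ ν (-(k * t ^ μ)))
      (Set.Ioi 0) ∧
    ∫ t in Set.Ioi (0:ℝ),
        Real.exp (-(s * t)) * t ^ (ν - 1) * mittagLeffler μ ν (-(k * t ^ μ))
      = s ^ (μ - ν) / (s ^ μ + k) := by
  have hsμ : (0:ℝ) < s ^ μ := Real.rpow_pos_of_pos hs μ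
  have hinvpos : (0:ℝ) < 1 / s := by positivity
  have hinvμ : ((1:ℝ)/s) ^ μ = (s ^ μ)⁻¹ := by
    rw [one_div, Real.inv_rpow hs.le]
  set F : ℕ → ℝ → ℝ := fun n t =>
    Real.exp (-(s * t)) * t ^ (ν - 1) * ((-(k * t ^ μ)) ^ n / Real.Gamma (μ * n + ν)) with hF
  have han : ∀ n : ℕ, (0:ℝ) < μ * n + ν := fun n => by positivity
  have hΓ : ∀ n : ℕ, 0 < Real.Gamma (μ * n + ν) := fun n => Real.Gamma_pos_of_pos (han n)
  -- pointwise form of F on Ioi 0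
  have hFeq : ∀ n : ℕ, ∀ t ∈ Set.Ioi (0:ℝ),
      F n t = ((-k) ^ n / Real.Gamma (μ * n + ν)) *
        (t ^ (μ * n + ν - 1) * Real.exp (-(s * t))) := by
    intro n t ht
    have ht' : (0:ℝ) < t := ht
    have h1 : (-(k * t ^ μ)) ^ n = (-k) ^ n * t ^ (μ * (n:ℝ)) := by
      rw [show -(k * t ^ μ) = (-k) * t ^ μ by ring, mul_pow, Real.rpow_mul ht'.le,
        Real.rpow_natCast]
    have h2 : t ^ (μ * (n:ℝ) + ν - 1) = t ^ (μ * (n:ℝ)) * t ^ (ν - 1) := by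
      rw [← Real.rpow_add ht']; ring_nf
    simp only [hF, h1, h2]; ring
  have hGint : ∀ n : ℕ, IntegrableOn
      (fun t : ℝ => t ^ (μ * n + ν - 1) * Real.exp (-(s * t))) (Set.Ioi 0) :=
    fun n => ml_aux_integrable (han n) hs
  have hFint : ∀ n : ℕ, IntegrableOn (F n) (Set.Ioi 0) := fun n =>
    IntegrableOn.congr_fun (Integrable.const_mul (hGint n)
      ((-k) ^ n / Real.Gamma (μ * n + ν))) (fun t ht => (hFeq n t ht).symm) measurableSet_Ioi
  have hGval : ∀ n : ℕ, ∫ t in Set.Ioi (0:ℝ), t ^ (μ * n + ν - 1) * Real.exp (-(s * t))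
      = (1/s) ^ (μ * n + ν) * Real.Gamma (μ * n + ν) :=
    fun n => Real.integral_rpow_mul_exp_neg_mul_Ioi (han n) hs
  have hpow : ∀ n : ℕ, ((1:ℝ)/s) ^ (μ * (n:ℝ) + ν) = ((1/s) ^ μ) ^ n * (1/s) ^ ν := by
    intro n
    rw [Real.rpow_add hinvpos, Real.rpow_mul hinvpos.le, Real.rpow_natCast]
  have hFval : ∀ n : ℕ, ∫ t in Set.Ioi (0:ℝ), F n t
      = (1/s) ^ ν * (-(k * (1/s) ^ μ)) ^ n := by
    intro n
    rw [setIntegral_congr_fun measurableSet_Ioi (hFeq n), integral_const_mul, hGval n, hpow n,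
      show -(k * (1/s) ^ μ) = (-k) * ((1/s) ^ μ) by ring, mul_pow]
    field_simp
  have hFnormeq : ∀ n : ℕ, ∀ t ∈ Set.Ioi (0:ℝ),
      ‖F n t‖ = (k ^ n / Real.Gamma (μ * n + ν)) *
        (t ^ (μ * n + ν - 1) * Real.exp (-(s * t))) := by
    intro n t ht
    have ht' : (0:ℝ) < t := ht
    rw [hFeq n t ht, norm_mul, Real.norm_eq_abs, Real.norm_eq_abs, abs_div, abs_pow, abs_neg,
      abs_of_nonneg hk, abs_of_pos (hΓ n),
      abs_of_nonneg (by positivity : (0:ℝ) ≤ t ^ (μ * n + ν - 1) * Real.exp (-(s * t)))]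
  have hFnormval : ∀ n : ℕ, ∫ t in Set.Ioi (0:ℝ), ‖F n t‖
      = (1/s) ^ ν * (k * (1/s) ^ μ) ^ n := by
    intro n
    rw [setIntegral_congr_fun measurableSet_Ioi (hFnormeq n), integral_const_mul, hGval n,
      hpow n, mul_pow]
    field_simp
  have hq : k * (1/s) ^ μ < 1 := by
    rw [hinvμ]
    rw [mul_inv_lt_iff₀ hsμ, one_mul]
    exact hsk
  have hq0 : 0 ≤ k * (1/s) ^ μ := by positivity
  have hsum_norm : Summable (fun n : ℕ => ∫ t in Set.Ioi (0:ℝ), ‖F n t‖) := by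
    simp only [hFnormval]
    exact (summable_geometric_of_lt_one hq0 hq).mul_left _
  -- the key lintegral bound
  have hmeasF : ∀ n : ℕ, AEStronglyMeasurable (F n) (volume.restrict (Set.Ioi 0)) :=
    fun n => (hFint n).1
  have key : ∑' n : ℕ, ∫⁻ t in Set.Ioi (0:ℝ), ‖F n t‖₊ ≠ ⊤ := by
    have h1 : ∀ n : ℕ, ∫⁻ t in Set.Ioi (0:ℝ), (‖F n t‖₊ : ENNReal)
        = (‖∫ t in Set.Ioi (0:ℝ), ‖F n t‖‖₊ : ENNReal) := by
      intro n
      rw [lintegral_coe_eq_integral _ (hFint n).norm, ENNReal.coe_nnreal_eq, coe_nnnorm,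
        Real.norm_of_nonneg (integral_nonneg fun a => norm_nonneg _)]
      simp [coe_nnnorm]
    rw [funext h1, ← ENNReal.coe_tsum]
    · exact ENNReal.coe_ne_top
    · simp_rw [← NNReal.summable_coe, coe_nnnorm]
      exact hsum_norm.abs
  have hae : ∀ᵐ t ∂(volume.restrict (Set.Ioi (0:ℝ))), Summable fun n : ℕ => ‖F n t‖ := by
    have h2 : ∫⁻ t in Set.Ioi (0:ℝ), ∑' n : ℕ, (‖F n t‖₊ : ENNReal) ≠ ⊤ := by
      rw [lintegral_tsum fun n => (hmeasF n).nnnorm.aemeasurable.coe_nnreal_ennreal]; exact key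
    filter_upwards [ae_lt_top' (AEMeasurable.ennreal_tsum fun n => (hmeasF n).nnnorm.aemeasurable.coe_nnreal_ennreal) h2]
      with t ht
    have := ENNReal.tsum_coe_ne_top_iff_summable_coe.mp ht.ne
    simpa [coe_nnnorm] using this
  have asm_tsum : AEStronglyMeasurable (fun t : ℝ => ∑' n : ℕ, F n t)
      (volume.restrict (Set.Ioi 0)) := by
    refine aestronglyMeasurable_of_tendsto_ae Filter.atTop
      (f := fun N t => ∑ n ∈ Finset.range N, F n t)
      (fun N => Finset.aestronglyMeasurable_fun_sum _ fun n _ => hmeasF n) ?_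
    filter_upwards [hae] with t ht
    exact ht.of_norm.hasSum.tendsto_sum_nat
  have hbound : ∫⁻ t in Set.Ioi (0:ℝ), ‖∑' n : ℕ, F n t‖₊
      ≤ ∑' n : ℕ, ∫⁻ t in Set.Ioi (0:ℝ), ‖F n t‖₊ := by
    rw [← lintegral_tsum fun n => (hmeasF n).nnnorm.aemeasurable.coe_nnreal_ennreal]
    refine lintegral_mono_ae ?_
    filter_upwards [hae] with t ht
    have hsnn : Summable fun n : ℕ => ‖F n t‖₊ := by
      rw [← NNReal.summable_coe]; simpa [coe_nnnorm] using ht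
    calc (‖∑' n : ℕ, F n t‖₊ : ENNReal) ≤ ((∑' n : ℕ, ‖F n t‖₊ : NNReal) : ENNReal) :=
          ENNReal.coe_le_coe.mpr (nnnorm_tsum_le hsnn)
      _ = ∑' n : ℕ, (‖F n t‖₊ : ENNReal) := ENNReal.coe_tsum hsnn
  have hint_tsum : IntegrableOn (fun t : ℝ => ∑' n : ℕ, F n t) (Set.Ioi 0) :=
    ⟨asm_tsum, lt_of_le_of_lt hbound key.lt_top⟩
  have heq : ∀ t ∈ Set.Ioi (0:ℝ),
      Real.exp (-(s * t)) * t ^ (ν - 1) * mittagLeffler μ ν (-(k * t ^ μ))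
        = ∑' n : ℕ, F n t := by
    intro t ht
    rw [mittagLeffler, ← tsum_mul_left]
  have hint : IntegrableOn
      (fun t : ℝ => Real.exp (-(s * t)) * t ^ (ν - 1) * mittagLeffler μ ν (-(k * t ^ μ)))
      (Set.Ioi 0) :=
    hint_tsum.congr_fun (fun t ht => (heq t ht).symm) measurableSet_Ioi
  refine ⟨hint, ?_⟩
  rw [setIntegral_congr_fun measurableSet_Ioi heq, integral_tsum hmeasF key]
  have : (fun n : ℕ => ∫ t in Set.Ioi (0:ℝ), F n t)
      = fun n : ℕ => (1/s) ^ ν * (-(k * (1/s) ^ μ)) ^ n := funext hFval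
  rw [this, tsum_mul_left, tsum_geometric_of_norm_lt_one (by
    rw [Real.norm_eq_abs, abs_neg, abs_of_nonneg hq0]; exact hq)]
  have h1ν : ((1:ℝ)/s) ^ ν = (s ^ ν)⁻¹ := by rw [one_div, Real.inv_rpow hs.le]
  have hsub : s ^ (μ - ν) = s ^ μ * (s ^ ν)⁻¹ := by
    rw [Real.rpow_sub hs, div_eq_mul_inv]
  rw [h1ν, hinvμ, hsub]
  have hν' : (0:ℝ) < s ^ ν := Real.rpow_pos_of_pos hs ν
  have hsk' : (0:ℝ) < s ^ μ + k := by linarith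
  field_simp
  rw [sub_neg_eq_add, div_self hsk'.ne']
end

section
/- Let A be a real n×n matrix, 0 < γ < 1, and x₀ ∈ ℝⁿ. Then the series x(t) = ∑_{k=0}^∞ (t^{k·γ}/Γ(k·γ + 1)) · A^k · x₀ converges for every t ≥ 0, the function x is differentiable on (0,∞), and x solves the homogeneous commensurate linear fractional system ᶜD^γ x = A·x: for every t > 0, (1/Γ(1-γ)) · ∫_0^t x'(τ)·(t-τ)^{-γ} dτ = A·x(t), with x(0) = x₀. -/
open Filter MeasureTheory Set intervalIntegral

set_option linter.unusedSectionVars false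
set_option linter.unusedTactic false

section MLAux

lemma ml_gamma_conv {γ x : ℝ} (hγ : 0 < γ) (hγ1 : γ < 1) (hx : 1 ≤ x) :
    x * Real.Gamma x ≤ Real.Gamma (x + γ) * (x + γ) ^ (1 - γ) := by
  have hx0 : (0:ℝ) < x := lt_of_lt_of_le one_pos hx
  have hxγ : (0:ℝ) < x + γ := by linarith
  have hΓ : 0 < Real.Gamma (x + γ) := Real.Gamma_pos_of_pos hxγ
  have hΓx : 0 < Real.Gamma x := Real.Gamma_pos_of_pos hx0
  have hc := Real.convexOn_log_Gamma.2 (show x + γ ∈ Set.Ioi (0:ℝ) from hxγ)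
    (show x + γ + 1 ∈ Set.Ioi (0:ℝ) by simp; linarith) hγ.le
    (show (0:ℝ) ≤ 1 - γ by linarith) (show γ + (1 - γ) = 1 by ring)
  simp only [smul_eq_mul, Function.comp_apply] at hc
  rw [show γ * (x + γ) + (1 - γ) * (x + γ + 1) = x + 1 by ring,
    Real.Gamma_add_one hx0.ne', Real.Gamma_add_one hxγ.ne',
    Real.log_mul hxγ.ne' hΓ.ne'] at hc
  have h2 := Real.exp_le_exp.mpr hc
  rw [Real.exp_log (by positivity)] at h2
  calc x * Real.Gamma x ≤ _ := h2
    _ = Real.Gamma (x + γ) * (x + γ) ^ (1 - γ) := by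
        rw [show γ * Real.log (Real.Gamma (x + γ)) + (1 - γ) * (Real.log (x + γ) +
            Real.log (Real.Gamma (x + γ))) = Real.log (Real.Gamma (x + γ)) +
            Real.log (x + γ) * (1 - γ) by ring, Real.exp_add, Real.exp_log hΓ,
          Real.rpow_def_of_pos hxγ]

lemma ml_summable_aux {γ : ℝ} (hγ : 0 < γ) (hγ1 : γ < 1) {B : ℝ} (hB : 0 ≤ B) :
    Summable (fun k : ℕ => ((k : ℝ) * γ + 1) * B ^ k / Real.Gamma ((k : ℝ) * γ + 1)) := by
  apply summable_of_ratio_norm_eventually_le (r := 1/2) (by norm_num)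
  have htend : Tendsto (fun k : ℕ => ((k : ℝ) * γ + 1) ^ γ) atTop atTop :=
    (tendsto_rpow_atTop hγ).comp (tendsto_atTop_add_const_right _ 1
      (Tendsto.atTop_mul_const hγ tendsto_natCast_atTop_atTop))
  filter_upwards [htend.eventually_ge_atTop (8 * B)] with k hk
  have hx1 : (1:ℝ) ≤ (k : ℝ) * γ + 1 := le_add_of_nonneg_left (by positivity)
  set x : ℝ := (k : ℝ) * γ + 1 with hxdef
  have hx0 : (0:ℝ) < x := by positivity
  have hΓx : 0 < Real.Gamma x := Real.Gamma_pos_of_pos hx0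
  have hxγ : (0:ℝ) < x + γ := by linarith
  have hΓxγ : 0 < Real.Gamma (x + γ) := Real.Gamma_pos_of_pos hxγ
  have hkey := ml_gamma_conv hγ hγ1 hx1
  have h2x : x + γ ≤ 2 * x := by linarith
  have hxx : x ^ γ * x ^ (1 - γ) = x := by
    rw [← Real.rpow_add hx0]; norm_num
  have hpow : (x + γ) ^ (1 - γ) ≤ 2 * x ^ (1 - γ) := by
    calc (x + γ) ^ (1 - γ) ≤ (2 * x) ^ (1 - γ) :=
          Real.rpow_le_rpow (by positivity) h2x (by linarith)
      _ = 2 ^ (1 - γ) * x ^ (1 - γ) := Real.mul_rpow (by norm_num) (by positivity)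
      _ ≤ 2 * x ^ (1 - γ) := by
          have h3 : (2:ℝ) ^ (1 - γ) ≤ 2 ^ (1:ℝ) :=
            Real.rpow_le_rpow_of_exponent_le (by norm_num) (by linarith)
          rw [Real.rpow_one] at h3
          exact mul_le_mul_of_nonneg_right h3 (by positivity)
  have h6 : x ^ γ * Real.Gamma x ≤ 2 * Real.Gamma (x + γ) := by
    have hpos : (0:ℝ) < x ^ (1 - γ) := by positivity
    rw [← mul_le_mul_iff_of_pos_right hpos]
    calc x ^ γ * Real.Gamma x * x ^ (1 - γ) = x * Real.Gamma x := by
          rw [mul_right_comm, hxx]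
      _ ≤ Real.Gamma (x + γ) * (x + γ) ^ (1 - γ) := hkey
      _ ≤ Real.Gamma (x + γ) * (2 * x ^ (1 - γ)) :=
          mul_le_mul_of_nonneg_left hpow hΓxγ.le
      _ = 2 * Real.Gamma (x + γ) * x ^ (1 - γ) := by ring
  have harg : ((k + 1 : ℕ) : ℝ) * γ + 1 = x + γ := by push_cast; ring
  have hBk : (0:ℝ) ≤ B ^ k := by positivity
  rw [harg, Real.norm_of_nonneg (by positivity), Real.norm_of_nonneg (by positivity),
    show (1:ℝ)/2 * (x * B ^ k / Real.Gamma x) = x * B ^ k / (2 * Real.Gamma x) by ring,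
    div_le_div_iff₀ hΓxγ (by positivity)]
  calc (x + γ) * B ^ (k + 1) * (2 * Real.Gamma x)
      ≤ 2 * x * B ^ (k + 1) * (2 * Real.Gamma x) :=
        mul_le_mul_of_nonneg_right (mul_le_mul_of_nonneg_right h2x
          (by positivity : (0:ℝ) ≤ B ^ (k+1))) (by positivity : (0:ℝ) ≤ 2 * Real.Gamma x)
    _ = (4 * B) * (x * B ^ k * Real.Gamma x) := by rw [pow_succ]; ring
    _ ≤ (x ^ γ / 2) * (x * B ^ k * Real.Gamma x) :=
        mul_le_mul_of_nonneg_right (by linarith) (by positivity)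
    _ = (x * B ^ k) * (x ^ γ * Real.Gamma x / 2) := by ring
    _ ≤ (x * B ^ k) * Real.Gamma (x + γ) :=
        mul_le_mul_of_nonneg_left (by linarith) (by positivity)

variable {E : Type*} [NormedAddCommGroup E] [NormedSpace ℝ E] [CompleteSpace E]

lemma ml_summable_series {γ C M : ℝ} (hγ : 0 < γ) (hγ1 : γ < 1) (hC : 0 ≤ C) (hM : 0 ≤ M)
    (v : ℕ → E) (hv : ∀ k, ‖v k‖ ≤ C ^ k * M) {t : ℝ} (ht : 0 ≤ t) :
    Summable (fun k : ℕ => (t ^ ((k : ℝ) * γ) / Real.Gamma ((k : ℝ) * γ + 1)) • v k) := by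
  apply Summable.of_norm_bounded
    ((ml_summable_aux hγ hγ1 (B := t ^ γ * C) (by positivity)).mul_left M)
  intro k
  have hΓ : 0 < Real.Gamma ((k : ℝ) * γ + 1) := Real.Gamma_pos_of_pos (by positivity)
  have hts : t ^ ((k : ℝ) * γ) = (t ^ γ) ^ k := by
    rw [mul_comm, Real.rpow_mul ht, Real.rpow_natCast]
  rw [norm_smul, Real.norm_of_nonneg (by positivity :
    (0:ℝ) ≤ t ^ ((k : ℝ) * γ) / Real.Gamma ((k : ℝ) * γ + 1))]
  calc t ^ ((k : ℝ) * γ) / Real.Gamma ((k : ℝ) * γ + 1) * ‖v k‖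
      ≤ t ^ ((k : ℝ) * γ) / Real.Gamma ((k : ℝ) * γ + 1) * (C ^ k * M) :=
        mul_le_mul_of_nonneg_left (hv k) (by positivity)
    _ = M * ((t ^ γ * C) ^ k / Real.Gamma ((k : ℝ) * γ + 1)) := by
        rw [hts, mul_pow]; ring
    _ ≤ M * (((k : ℝ) * γ + 1) * (t ^ γ * C) ^ k / Real.Gamma ((k : ℝ) * γ + 1)) := by
        gcongr
        exact le_mul_of_one_le_left (by positivity)
          (le_add_of_nonneg_left (by positivity))

lemma ml_deriv_bound {γ C M : ℝ} (hγ : 0 < γ) (hC : 0 ≤ C) (hM : 0 ≤ M)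
    (v : ℕ → E) (hv : ∀ k, ‖v k‖ ≤ C ^ k * M) {α β y : ℝ} (hα : 0 < α)
    (hy : y ∈ Set.Ioo α β) (k : ℕ) :
    ‖(((k : ℝ) * γ) * y ^ ((k : ℝ) * γ - 1) / Real.Gamma ((k : ℝ) * γ + 1)) • v k‖
      ≤ (((k : ℝ) * γ + 1) * (β ^ γ * C) ^ k / Real.Gamma ((k : ℝ) * γ + 1)) * (M / α) := by
  have hy0 : 0 < y := lt_trans hα hy.1
  have hβ : 0 < β := lt_trans hy0 hy.2
  have hΓ : 0 < Real.Gamma ((k : ℝ) * γ + 1) := Real.Gamma_pos_of_pos (by positivity)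
  have hkγ : (0:ℝ) ≤ (k : ℝ) * γ := by positivity
  have hβp : (0:ℝ) ≤ β ^ ((k : ℝ) * γ) := Real.rpow_nonneg hβ.le _
  have h1 : y ^ ((k : ℝ) * γ - 1) ≤ β ^ ((k : ℝ) * γ) / α := by
    rw [Real.rpow_sub hy0, Real.rpow_one]
    exact div_le_div₀ hβp (Real.rpow_le_rpow hy0.le hy.2.le hkγ) hα hy.1.le
  have hβs : β ^ ((k : ℝ) * γ) = (β ^ γ) ^ k := by
    rw [mul_comm, Real.rpow_mul hβ.le, Real.rpow_natCast]
  rw [norm_smul, Real.norm_of_nonneg (div_nonneg (mul_nonneg hkγ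
    (Real.rpow_nonneg hy0.le _)) hΓ.le)]
  calc ((k : ℝ) * γ) * y ^ ((k : ℝ) * γ - 1) / Real.Gamma ((k : ℝ) * γ + 1) * ‖v k‖
      ≤ ((k : ℝ) * γ) * (β ^ ((k : ℝ) * γ) / α) / Real.Gamma ((k : ℝ) * γ + 1) * (C ^ k * M) := by
        apply mul_le_mul _ (hv k) (norm_nonneg _)
        · exact div_nonneg (mul_nonneg hkγ (div_nonneg hβp hα.le)) hΓ.le
        · gcongr
    _ = (((k : ℝ) * γ) * (β ^ γ * C) ^ k / Real.Gamma ((k : ℝ) * γ + 1)) * (M / α) := by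
        rw [hβs, mul_pow]; ring
    _ ≤ (((k : ℝ) * γ + 1) * (β ^ γ * C) ^ k / Real.Gamma ((k : ℝ) * γ + 1)) * (M / α) := by
        apply mul_le_mul_of_nonneg_right _ (div_nonneg hM hα.le)
        gcongr
        linarith

set_option maxHeartbeats 1000000 in
lemma ml_hasDerivAt_series {γ C M : ℝ} (hγ : 0 < γ) (hγ1 : γ < 1) (hC : 0 ≤ C) (hM : 0 ≤ M)
    (v : ℕ → E) (hv : ∀ k, ‖v k‖ ≤ C ^ k * M) {τ : ℝ} (hτ : 0 < τ) :
    HasDerivAt (fun z : ℝ => ∑' k : ℕ, (z ^ ((k : ℝ) * γ) / Real.Gamma ((k : ℝ) * γ + 1)) • v k)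
      (∑' k : ℕ, (((k : ℝ) * γ) * τ ^ ((k : ℝ) * γ - 1) / Real.Gamma ((k : ℝ) * γ + 1)) • v k)
      τ := by
  have hmem : τ ∈ Set.Ioo (τ/2) (τ+1) := ⟨by linarith, by linarith⟩
  refine hasDerivAt_tsum_of_isPreconnected
    (g := fun (k : ℕ) (z : ℝ) => (z ^ ((k : ℝ) * γ) / Real.Gamma ((k : ℝ) * γ + 1)) • v k)
    (g' := fun (k : ℕ) (y : ℝ) =>
      (((k : ℝ) * γ) * y ^ ((k : ℝ) * γ - 1) / Real.Gamma ((k : ℝ) * γ + 1)) • v k)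
    (u := fun k : ℕ => (((k : ℝ) * γ + 1) * ((τ+1) ^ γ * C) ^ k /
      Real.Gamma ((k : ℝ) * γ + 1)) * (M / (τ/2)))
    ((ml_summable_aux hγ hγ1 (by positivity)).mul_right _)
    isOpen_Ioo isPreconnected_Ioo ?_ ?_ hmem
    (ml_summable_series hγ hγ1 hC hM v hv hτ.le) hmem
  · intro k y hy
    have hy0 : 0 < y := lt_trans (by linarith) hy.1
    exact ((Real.hasDerivAt_rpow_const (x := y) (p := (k : ℝ) * γ)
      (Or.inl hy0.ne')).div_const _).smul_const (v k)
  · intro k y hy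
    exact ml_deriv_bound hγ hC hM v hv (by linarith) hy k

lemma ml_summable_deriv {γ C M : ℝ} (hγ : 0 < γ) (hγ1 : γ < 1) (hC : 0 ≤ C) (hM : 0 ≤ M)
    (v : ℕ → E) (hv : ∀ k, ‖v k‖ ≤ C ^ k * M) {τ : ℝ} (hτ : 0 < τ) :
    Summable (fun k : ℕ =>
      (((k : ℝ) * γ) * τ ^ ((k : ℝ) * γ - 1) / Real.Gamma ((k : ℝ) * γ + 1)) • v k) := by
  apply Summable.of_norm_bounded
    ((ml_summable_aux hγ hγ1 (B := (τ+1) ^ γ * C) (by positivity)).mul_right (M / (τ/2)))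
  intro k
  exact ml_deriv_bound hγ hC hM v hv (by linarith : (0:ℝ) < τ/2)
    ⟨by linarith, by linarith⟩ k

end MLAux

lemma ml_beta_integrable {a b t : ℝ} (ha : 0 < a) (hb0 : 0 < b) (hb1 : b < 1) (ht : 0 < t) :
    IntegrableOn (fun τ : ℝ => τ ^ (a - 1) * (t - τ) ^ (b - 1)) (Set.Ioc 0 t) := by
  rw [integrableOn_Ioc_iff_integrableOn_Ioo]
  have hsplit : Set.Ioc (0:ℝ) (t/2) ∪ Set.Ioo (t/2) t = Set.Ioo 0 t :=
    Set.Ioc_union_Ioo_eq_Ioo (by linarith) (by linarith)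
  rw [← hsplit]
  apply IntegrableOn.union
  · -- on Ioc 0 (t/2) : bound by (t/2)^(b-1) * τ^(a-1)
    have hmaj : IntegrableOn (fun τ : ℝ => (t/2) ^ (b-1) * τ ^ (a - 1)) (Set.Ioc 0 (t/2)) :=
      ((intervalIntegrable_iff_integrableOn_Ioc_of_le (by linarith)).mp
        (intervalIntegral.intervalIntegrable_rpow' (by linarith))).const_mul _
    apply Integrable.mono' hmaj
    · apply ContinuousOn.aestronglyMeasurable _ measurableSet_Ioc
      apply ContinuousOn.mul
      · exact continuousOn_id.rpow_const fun x hx => Or.inl (ne_of_gt hx.1)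
      · exact (continuousOn_const.sub continuousOn_id).rpow_const
          fun x hx => Or.inl (by show t - x ≠ 0; intro h; nlinarith [hx.2])
    · filter_upwards [ae_restrict_mem measurableSet_Ioc] with τ hτ
      have h1 : (0:ℝ) < τ := hτ.1
      have h2 : t - τ ≤ t := by linarith
      rw [Real.norm_of_nonneg (mul_nonneg (Real.rpow_nonneg h1.le _)
        (Real.rpow_nonneg (by linarith [hτ.2] : (0:ℝ) ≤ t - τ) _)), mul_comm]
      apply mul_le_mul_of_nonneg_right _ (Real.rpow_nonneg h1.le _)
      exact Real.rpow_le_rpow_of_nonpos (by linarith) (by linarith [hτ.2]) (by linarith)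
  · -- on Ioo (t/2) t : bound by ((t/2)^(a-1) + t^(a-1)) * (t-τ)^(b-1)
    have hmaj0 : IntervalIntegrable (fun τ : ℝ => (t - τ) ^ (b - 1)) volume (t/2) t := by
      have := (intervalIntegral.intervalIntegrable_rpow' (a := 0) (b := t/2)
        (by linarith : (-1:ℝ) < b - 1)).comp_sub_left t
      simpa [sub_half] using this.symm
    have hmaj : IntegrableOn (fun τ : ℝ => ((t/2) ^ (a-1) + t ^ (a-1)) * (t - τ) ^ (b - 1))
        (Set.Ioo (t/2) t) :=
      ((intervalIntegrable_iff_integrableOn_Ioo_of_le (by linarith)).mp hmaj0).const_mul _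
    apply Integrable.mono' hmaj
    · apply ContinuousOn.aestronglyMeasurable _ measurableSet_Ioo
      apply ContinuousOn.mul
      · exact continuousOn_id.rpow_const fun x hx =>
          Or.inl (by simp only [id]; nlinarith [hx.1])
      · exact (continuousOn_const.sub continuousOn_id).rpow_const
          fun x hx => Or.inl (by show t - x ≠ 0; intro h; nlinarith [hx.2])
    · filter_upwards [ae_restrict_mem measurableSet_Ioo] with τ hτ
      have h1 : (0:ℝ) < t/2 := by linarith
      have h2 : (0:ℝ) < τ := lt_trans h1 hτ.1
      have h3 : (0:ℝ) ≤ t - τ := by linarith [hτ.2]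
      rw [Real.norm_of_nonneg (mul_nonneg (Real.rpow_nonneg h2.le _) (Real.rpow_nonneg h3 _))]
      apply mul_le_mul_of_nonneg_right _ (Real.rpow_nonneg h3 _)
      rcases le_total 1 a with h | h
      · calc τ ^ (a-1) ≤ t ^ (a-1) :=
            Real.rpow_le_rpow h2.le hτ.2.le (by linarith)
          _ ≤ (t/2) ^ (a-1) + t ^ (a-1) := le_add_of_nonneg_left (by positivity)
      · calc τ ^ (a-1) ≤ (t/2) ^ (a-1) :=
            Real.rpow_le_rpow_of_nonpos h1 hτ.1.le (by linarith)
          _ ≤ (t/2) ^ (a-1) + t ^ (a-1) := le_add_of_nonneg_right (by positivity)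

lemma ml_beta_value {a b t : ℝ} (ha : 0 < a) (hb : 0 < b) (ht : 0 < t) :
    ∫ τ in (0:ℝ)..t, τ ^ (a - 1) * (t - τ) ^ (b - 1)
      = t ^ (a + b - 1) * (Real.Gamma a * Real.Gamma b / Real.Gamma (a + b)) := by
  have hne : Complex.Gamma ((a:ℂ) + (b:ℂ)) ≠ 0 := by
    rw [show (a:ℂ) + (b:ℂ) = ((a + b : ℝ) : ℂ) by push_cast; ring, Complex.Gamma_ofReal]
    exact_mod_cast (Real.Gamma_pos_of_pos (by linarith : (0:ℝ) < a + b)).ne'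
  have h3 := Complex.Gamma_mul_Gamma_eq_betaIntegral (s := (a:ℂ)) (t := (b:ℂ))
    (by simpa using ha) (by simpa using hb)
  have hbeta : Complex.betaIntegral (a:ℂ) (b:ℂ)
      = ((Real.Gamma a * Real.Gamma b / Real.Gamma (a + b) : ℝ) : ℂ) := by
    have h4 : Complex.betaIntegral (a:ℂ) (b:ℂ)
        = Complex.Gamma (a:ℂ) * Complex.Gamma (b:ℂ) / Complex.Gamma ((a:ℂ) + (b:ℂ)) := by
      rw [eq_div_iff hne, mul_comm, h3]
    rw [h4, show (a:ℂ) + (b:ℂ) = ((a + b : ℝ) : ℂ) by push_cast; ring]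
    rw [Complex.Gamma_ofReal, Complex.Gamma_ofReal, Complex.Gamma_ofReal]
    push_cast
    ring
  have h1 : (∫ τ in (0:ℝ)..t, ((τ ^ (a - 1) * (t - τ) ^ (b - 1) : ℝ) : ℂ))
      = ∫ τ in (0:ℝ)..t, (τ:ℂ) ^ ((a:ℂ) - 1) * ((t:ℂ) - (τ:ℂ)) ^ ((b:ℂ) - 1) := by
    apply intervalIntegral.integral_congr
    intro τ hτ
    rw [Set.uIcc_of_le ht.le] at hτ
    calc ((τ ^ (a - 1) * (t - τ) ^ (b - 1) : ℝ) : ℂ)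
        = ((τ ^ (a - 1) : ℝ) : ℂ) * (((t - τ) ^ (b - 1) : ℝ) : ℂ) := by push_cast; ring
      _ = (τ:ℂ) ^ ((a:ℂ) - 1) * ((t:ℂ) - (τ:ℂ)) ^ ((b:ℂ) - 1) := by
          rw [Complex.ofReal_cpow hτ.1 (a - 1),
            Complex.ofReal_cpow (sub_nonneg.mpr hτ.2) (b - 1)]
          norm_cast
  rw [← Complex.ofReal_inj, ← intervalIntegral.integral_ofReal, h1,
    Complex.betaIntegral_scaled (a:ℂ) (b:ℂ) ht, hbeta,
    show (a:ℂ) + (b:ℂ) - 1 = ((a + b - 1 : ℝ) : ℂ) by push_cast; ring,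
    ← Complex.ofReal_cpow ht.le]
  push_cast
  ring

/-- Let A be a real n×n matrix, 0 < γ < 1, and x₀ ∈ ℝⁿ. The series
`x(t) = ∑_{k=0}^∞ (t^{k·γ}/Γ(k·γ+1)) · A^k · x₀` converges for every t ≥ 0, x is
differentiable on (0,∞), and x solves the homogeneous commensurate linear fractional
system `ᶜD^γ x = A·x` with `x(0) = x₀`. -/
theorem matrix_mittagLeffler_solves_linear_fractional_system
    (n : ℕ) (A : Matrix (Fin n) (Fin n) ℝ) (γ : ℝ) (hγ : 0 < γ) (hγ1 : γ < 1)
    (x₀ : Fin n → ℝ) (x : ℝ → (Fin n → ℝ))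
    (hx : x = fun t : ℝ =>
      ∑' k : ℕ, (t ^ ((k : ℝ) * γ) / Real.Gamma ((k : ℝ) * γ + 1)) • (A ^ k).mulVec x₀) :
    (∀ t : ℝ, 0 ≤ t →
      Summable (fun k : ℕ =>
        (t ^ ((k : ℝ) * γ) / Real.Gamma ((k : ℝ) * γ + 1)) • (A ^ k).mulVec x₀)) ∧
    (∀ t : ℝ, 0 < t → DifferentiableAt ℝ x t) ∧
    (∀ t : ℝ, 0 < t →
      (1 / Real.Gamma (1 - γ)) •
          (∫ τ in (0:ℝ)..t, ((t - τ) ^ (-γ) : ℝ) • deriv x τ)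
        = A.mulVec (x t)) ∧
    x 0 = x₀ := by
  subst hx
  set L : (Fin n → ℝ) →L[ℝ] (Fin n → ℝ) :=
    LinearMap.toContinuousLinearMap (Matrix.mulVecLin A) with hLdef
  have hLapp : ∀ w, L w = A.mulVec w := fun w => rfl
  set C : ℝ := ‖L‖ with hCdef
  have hC : 0 ≤ C := norm_nonneg _
  have hv : ∀ k : ℕ, ‖(A ^ k).mulVec x₀‖ ≤ C ^ k * ‖x₀‖ := by
    intro k; induction k with
    | zero => simp
    | succ k ih =>
        have hstep : (A ^ (k+1)).mulVec x₀ = L ((A ^ k).mulVec x₀) := by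
          rw [hLapp, pow_succ', ← Matrix.mulVec_mulVec]
        rw [hstep]
        calc ‖L ((A ^ k).mulVec x₀)‖ ≤ C * ‖(A ^ k).mulVec x₀‖ := L.le_opNorm _
          _ ≤ C * (C ^ k * ‖x₀‖) := mul_le_mul_of_nonneg_left ih hC
          _ = C ^ (k+1) * ‖x₀‖ := by ring
  have hM : (0:ℝ) ≤ ‖x₀‖ := norm_nonneg _
  have hsummable : ∀ t : ℝ, 0 ≤ t → Summable (fun k : ℕ =>
      (t ^ ((k : ℝ) * γ) / Real.Gamma ((k : ℝ) * γ + 1)) • (A ^ k).mulVec x₀) :=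
    fun t ht => ml_summable_series hγ hγ1 hC hM _ hv ht
  have hD : ∀ τ : ℝ, 0 < τ → HasDerivAt
      (fun z : ℝ => ∑' k : ℕ, (z ^ ((k : ℝ) * γ) / Real.Gamma ((k : ℝ) * γ + 1)) •
        (A ^ k).mulVec x₀)
      (∑' k : ℕ, (((k : ℝ) * γ) * τ ^ ((k : ℝ) * γ - 1) / Real.Gamma ((k : ℝ) * γ + 1)) •
        (A ^ k).mulVec x₀) τ :=
    fun τ hτ => ml_hasDerivAt_series hγ hγ1 hC hM _ hv hτ
  refine ⟨hsummable, fun t ht => (hD t ht).differentiableAt, ?_, ?_⟩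
  · -- the fractional ODE
    intro t ht
    have hΓγ : 0 < Real.Gamma (1 - γ) := Real.Gamma_pos_of_pos (by linarith)
    have hstep : ∀ k : ℕ, (A ^ (k+1)).mulVec x₀ = L ((A ^ k).mulVec x₀) := by
      intro k; rw [hLapp, pow_succ', ← Matrix.mulVec_mulVec]
    set F : ℕ → ℝ → (Fin n → ℝ) := fun k τ =>
      ((t - τ) ^ (-γ) * (((k : ℝ) * γ) * τ ^ ((k : ℝ) * γ - 1) /
        Real.Gamma ((k : ℝ) * γ + 1))) • (A ^ k).mulVec x₀ with hFdef
    have hF0 : F 0 = fun _ => (0 : Fin n → ℝ) := by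
      funext τ; simp [hFdef]
    have hFsucc : ∀ (k : ℕ) (τ : ℝ), F (k+1) τ =
        ((((k+1 : ℕ) : ℝ) * γ / Real.Gamma (((k+1 : ℕ) : ℝ) * γ + 1)) *
          (τ ^ (((k+1 : ℕ) : ℝ) * γ - 1) * (t - τ) ^ ((1 - γ) - 1))) •
          (A ^ (k+1)).mulVec x₀ := by
      intro k τ
      rw [hFdef]
      congr 1
      rw [show (1 : ℝ) - γ - 1 = -γ by ring]
      ring
    have ha1 : ∀ k : ℕ, (0:ℝ) < ((k+1 : ℕ) : ℝ) * γ := by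
      intro k
      have : (0:ℝ) < ((k+1 : ℕ) : ℝ) := by exact_mod_cast Nat.succ_pos k
      positivity
    have hFint : ∀ k, Integrable (F k) (volume.restrict (Set.Ioc 0 t)) := by
      intro k
      cases k with
      | zero => rw [hF0]; exact integrable_zero _ _ _
      | succ k =>
          have hI := (((ml_beta_integrable (ha1 k) (by linarith : (0:ℝ) < 1 - γ)
            (by linarith) ht).const_mul
            (((k+1 : ℕ) : ℝ) * γ / Real.Gamma (((k+1 : ℕ) : ℝ) * γ + 1))).smul_const
            ((A ^ (k+1)).mulVec x₀))
          have heq : F (k+1) = fun τ =>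
              ((((k+1 : ℕ) : ℝ) * γ / Real.Gamma (((k+1 : ℕ) : ℝ) * γ + 1)) *
                (τ ^ (((k+1 : ℕ) : ℝ) * γ - 1) * (t - τ) ^ ((1 - γ) - 1))) •
                (A ^ (k+1)).mulVec x₀ := funext (hFsucc k)
          rw [heq]; exact hI
    have hbval : ∀ k : ℕ, (∫ τ in Set.Ioc (0:ℝ) t,
        (((k+1 : ℕ) : ℝ) * γ / Real.Gamma (((k+1 : ℕ) : ℝ) * γ + 1)) *
          (τ ^ (((k+1 : ℕ) : ℝ) * γ - 1) * (t - τ) ^ ((1 - γ) - 1)))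
        = Real.Gamma (1 - γ) * (t ^ ((k : ℝ) * γ) / Real.Gamma ((k : ℝ) * γ + 1)) := by
      intro k
      have ha : (0:ℝ) < ((k+1 : ℕ) : ℝ) * γ := ha1 k
      have hΓa : 0 < Real.Gamma (((k+1 : ℕ) : ℝ) * γ) := Real.Gamma_pos_of_pos ha
      have hΓk : 0 < Real.Gamma ((k : ℝ) * γ + 1) := Real.Gamma_pos_of_pos (by positivity)
      rw [MeasureTheory.integral_const_mul, ← intervalIntegral.integral_of_le ht.le,
        ml_beta_value ha (by linarith : (0:ℝ) < 1 - γ) ht,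
        show ((k+1 : ℕ) : ℝ) * γ + (1 - γ) - 1 = (k : ℝ) * γ by push_cast; ring,
        show ((k+1 : ℕ) : ℝ) * γ + (1 - γ) = (k : ℝ) * γ + 1 by push_cast; ring,
        Real.Gamma_add_one ha.ne']
      field_simp
    have hFval : ∀ k : ℕ, (∫ τ in Set.Ioc (0:ℝ) t, F (k+1) τ)
        = (Real.Gamma (1 - γ) * (t ^ ((k : ℝ) * γ) / Real.Gamma ((k : ℝ) * γ + 1))) •
          (A ^ (k+1)).mulVec x₀ := by
      intro k
      simp only [hFsucc]
      rw [_root_.integral_smul_const, hbval k]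
    have hFnorm : ∀ k : ℕ, (∫ τ in Set.Ioc (0:ℝ) t, ‖F (k+1) τ‖)
        = (Real.Gamma (1 - γ) * (t ^ ((k : ℝ) * γ) / Real.Gamma ((k : ℝ) * γ + 1))) *
          ‖(A ^ (k+1)).mulVec x₀‖ := by
      intro k
      have hcg : ∀ τ ∈ Set.Ioc (0:ℝ) t, ‖F (k+1) τ‖ =
          ((((k+1 : ℕ) : ℝ) * γ / Real.Gamma (((k+1 : ℕ) : ℝ) * γ + 1)) *
            (τ ^ (((k+1 : ℕ) : ℝ) * γ - 1) * (t - τ) ^ ((1 - γ) - 1))) *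
            ‖(A ^ (k+1)).mulVec x₀‖ := by
        intro τ hτ
        have hΓa1 : 0 < Real.Gamma (((k+1 : ℕ) : ℝ) * γ + 1) :=
          Real.Gamma_pos_of_pos (by linarith [ha1 k])
        have hnn : (0:ℝ) ≤ (((k+1 : ℕ) : ℝ) * γ / Real.Gamma (((k+1 : ℕ) : ℝ) * γ + 1)) *
            (τ ^ (((k+1 : ℕ) : ℝ) * γ - 1) * (t - τ) ^ ((1 - γ) - 1)) :=
          mul_nonneg (div_nonneg (ha1 k).le hΓa1.le)
            (mul_nonneg (Real.rpow_nonneg hτ.1.le _)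
              (Real.rpow_nonneg (by linarith [hτ.2] : (0:ℝ) ≤ t - τ) _))
        rw [hFsucc, norm_smul, Real.norm_of_nonneg hnn]
      rw [setIntegral_congr_fun measurableSet_Ioc hcg,
        MeasureTheory.integral_mul_const, hbval k]
    have hWsummable : Summable (fun k : ℕ => ∫ τ in Set.Ioc (0:ℝ) t, ‖F (k+1) τ‖) := by
      simp only [hFnorm]
      apply Summable.of_norm_bounded
        ((ml_summable_aux hγ hγ1 (B := t ^ γ * C) (by positivity)).mul_left
          (Real.Gamma (1 - γ) * (C * ‖x₀‖)))
      intro k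
      have hΓk : 0 < Real.Gamma ((k : ℝ) * γ + 1) := Real.Gamma_pos_of_pos (by positivity)
      have hts : t ^ ((k : ℝ) * γ) = (t ^ γ) ^ k := by
        rw [mul_comm, Real.rpow_mul ht.le, Real.rpow_natCast]
      rw [Real.norm_of_nonneg (mul_nonneg (mul_nonneg hΓγ.le
        (by positivity)) (norm_nonneg _))]
      calc Real.Gamma (1 - γ) * (t ^ ((k : ℝ) * γ) / Real.Gamma ((k : ℝ) * γ + 1)) *
            ‖(A ^ (k+1)).mulVec x₀‖
          ≤ Real.Gamma (1 - γ) * (t ^ ((k : ℝ) * γ) / Real.Gamma ((k : ℝ) * γ + 1)) *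
            (C ^ (k+1) * ‖x₀‖) := by
            apply mul_le_mul_of_nonneg_left (hv (k+1))
              (mul_nonneg hΓγ.le (by positivity))
        _ = (Real.Gamma (1 - γ) * (C * ‖x₀‖)) *
            ((t ^ γ * C) ^ k / Real.Gamma ((k : ℝ) * γ + 1)) := by
            rw [hts, mul_pow, pow_succ]; ring
        _ ≤ (Real.Gamma (1 - γ) * (C * ‖x₀‖)) *
            (((k : ℝ) * γ + 1) * (t ^ γ * C) ^ k / Real.Gamma ((k : ℝ) * γ + 1)) := by
            apply mul_le_mul_of_nonneg_left _ (by positivity)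
            gcongr
            exact le_mul_of_one_le_left (by positivity)
              (le_add_of_nonneg_left (by positivity))
    have hFnormsum : Summable (fun k : ℕ => ∫ τ in Set.Ioc (0:ℝ) t, ‖F k τ‖) :=
      (summable_nat_add_iff 1).mp hWsummable
    have hinter := MeasureTheory.integral_tsum_of_summable_integral_norm hFint hFnormsum
    have hS : Summable (fun k : ℕ => ∫ τ in Set.Ioc (0:ℝ) t, F k τ) :=
      Summable.of_norm_bounded hFnormsum (fun k => norm_integral_le_integral_norm _)
    rw [intervalIntegral.integral_of_le ht.le]
    have hcong : (∫ τ in Set.Ioc (0:ℝ) t, ((t - τ) ^ (-γ) : ℝ) •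
          deriv (fun z : ℝ => ∑' k : ℕ, (z ^ ((k : ℝ) * γ) /
            Real.Gamma ((k : ℝ) * γ + 1)) • (A ^ k).mulVec x₀) τ)
        = ∫ τ in Set.Ioc (0:ℝ) t, ∑' k : ℕ, F k τ := by
      apply setIntegral_congr_fun measurableSet_Ioc
      intro τ hτ
      simp only
      rw [(hD τ hτ.1).deriv,
        ← Summable.tsum_const_smul (((t - τ) ^ (-γ)) : ℝ) (ml_summable_deriv hγ hγ1 hC hM _ hv hτ.1)]
      exact tsum_congr fun k => smul_smul _ _ _
    rw [hcong, ← hinter, Summable.tsum_eq_zero_add hS,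
      show (∫ τ in Set.Ioc (0:ℝ) t, F 0 τ) = 0 by rw [hF0]; simp, zero_add]
    have hw : Summable (fun k : ℕ =>
        (t ^ ((k : ℝ) * γ) / Real.Gamma ((k : ℝ) * γ + 1)) • (A ^ (k+1)).mulVec x₀) :=
      ml_summable_series hγ hγ1 hC (M := C * ‖x₀‖) (by positivity)
        (fun k => (A ^ (k+1)).mulVec x₀)
        (fun k => by
          calc ‖(A ^ (k+1)).mulVec x₀‖ ≤ C ^ (k+1) * ‖x₀‖ := hv (k+1)
            _ = C ^ k * (C * ‖x₀‖) := by ring) ht.le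
    calc (1 / Real.Gamma (1 - γ)) • ∑' k : ℕ, ∫ τ in Set.Ioc (0:ℝ) t, F (k+1) τ
        = (1 / Real.Gamma (1 - γ)) • ∑' k : ℕ, Real.Gamma (1 - γ) •
            ((t ^ ((k : ℝ) * γ) / Real.Gamma ((k : ℝ) * γ + 1)) • (A ^ (k+1)).mulVec x₀) := by
          congr 1
          exact tsum_congr fun k => by rw [hFval k, ← smul_smul]
      _ = ∑' k : ℕ, (t ^ ((k : ℝ) * γ) / Real.Gamma ((k : ℝ) * γ + 1)) •
            (A ^ (k+1)).mulVec x₀ := by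
          rw [Summable.tsum_const_smul _ hw, smul_smul, one_div, inv_mul_cancel₀ hΓγ.ne', one_smul]
      _ = A.mulVec (∑' k : ℕ, (t ^ ((k : ℝ) * γ) / Real.Gamma ((k : ℝ) * γ + 1)) •
            (A ^ k).mulVec x₀) := by
          rw [← hLapp, L.map_tsum (hsummable t ht.le)]
          exact tsum_congr fun k => by
            rw [_root_.map_smul, ← hstep k]
  · -- initial value
    simp only
    rw [tsum_eq_single 0 ?_]
    · norm_num [Real.Gamma_one, Matrix.one_mulVec]
    · intro k hk
      rw [Real.zero_rpow (mul_ne_zero (Nat.cast_ne_zero.mpr hk) hγ.ne'), zero_div, zero_smul]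
end
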